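/- arXiv:0709.2097 — 6 statements merged into one kernel-verified Lean document; each statement's English description precedes it below -/
import Mathlib

section
/- For any natural number $a$ and any odd natural number $b$, $\sum_{j=0}^{b} (-1)^j \binom{a}{j}\binom{a+1}{b-j} = (-1)^{(b-1)/2}\binom{a}{(b-1)/2}$. -/
open Polynomial Finset

lemma one_sub_X_pow_expand (d n : ℕ) :
    ((1 - X ^ d : Polynomial ℤ)) ^ n =
      ∑ i ∈ Finset.range (n + 1), C ((-1 : ℤ) ^ i * n.choose i) * X ^ (d * i) := by
  rw [sub_eq_add_neg, add_comm, add_pow]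
  refine Finset.sum_congr rfl fun i hi => ?_
  rw [neg_pow, one_pow, mul_one]
  simp only [map_mul, map_pow, map_neg, map_one, map_natCast]
  ring

lemma coeff_one_sub_X_sq_pow (a m : ℕ) :
    (((1 - X ^ 2 : Polynomial ℤ)) ^ a).coeff (2 * m) = (-1 : ℤ) ^ m * a.choose m := by
  rw [one_sub_X_pow_expand 2 a, finset_sum_coeff]
  simp only [coeff_C_mul, coeff_X_pow]
  rw [Finset.sum_eq_single m]
  · simp
  · intro i _ hi
    rw [if_neg (by omega), mul_zero]
  · intro h
    have ha : a < m := by simpa using h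
    rw [Nat.choose_eq_zero_of_lt ha]; simp

lemma coeff_one_sub_X_sq_pow_odd (a m : ℕ) :
    (((1 - X ^ 2 : Polynomial ℤ)) ^ a).coeff (2 * m + 1) = 0 := by
  rw [one_sub_X_pow_expand 2 a, finset_sum_coeff]
  refine Finset.sum_eq_zero fun i _ => ?_
  rw [coeff_C_mul, coeff_X_pow, if_neg (by omega), mul_zero]

lemma coeff_one_sub_X_pow (n k : ℕ) :
    (((1 - X : Polynomial ℤ)) ^ n).coeff k = (-1 : ℤ) ^ k * n.choose k := by
  have h := one_sub_X_pow_expand 1 n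
  simp only [pow_one, one_mul] at h
  rw [h, finset_sum_coeff]
  simp only [coeff_C_mul, coeff_X_pow]
  rw [Finset.sum_eq_single k]
  · simp
  · intro i _ hi
    rw [if_neg (Ne.symm hi), mul_zero]
  · intro hk
    have hn : n < k := by simpa using hk
    rw [Nat.choose_eq_zero_of_lt hn]; simp

theorem binomial_alternating_sum (a b : ℕ) (hb : Odd b) :
    ∑ j ∈ Finset.range (b + 1),
        (-1 : ℤ) ^ j * (a.choose j) * ((a + 1).choose (b - j)) =
      (-1 : ℤ) ^ ((b - 1) / 2) * (a.choose ((b - 1) / 2)) := by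
  obtain ⟨m, rfl⟩ : ∃ m, b = 2 * m + 1 := by
    obtain ⟨m, hm⟩ := hb; exact ⟨m, by omega⟩
  have hdiv : (2 * m + 1 - 1) / 2 = m := by omega
  rw [hdiv]
  have key : ((1 - X) ^ a * (1 + X) ^ (a + 1) : Polynomial ℤ)
      = (1 + X) * (1 - X ^ 2) ^ a := by
    rw [show ((1 : Polynomial ℤ) - X ^ 2) = (1 - X) * (1 + X) by ring, mul_pow]
    ring
  have hc := congrArg (fun p : Polynomial ℤ => p.coeff (2 * m + 1)) key
  simp only [coeff_mul, Finset.Nat.sum_antidiagonal_eq_sum_range_succ_mk] at hc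
  have hL : ∑ j ∈ Finset.range (2 * m + 1 + 1),
      (((1 - X : Polynomial ℤ)) ^ a).coeff j *
        (((1 + X : Polynomial ℤ)) ^ (a + 1)).coeff (2 * m + 1 - j)
      = ∑ j ∈ Finset.range (2 * m + 1 + 1),
        (-1 : ℤ) ^ j * (a.choose j) * ((a + 1).choose (2 * m + 1 - j)) := by
    refine Finset.sum_congr rfl fun j _ => ?_
    rw [coeff_one_sub_X_pow, coeff_one_add_X_pow, mul_assoc]
  have hR : ∑ j ∈ Finset.range (2 * m + 1 + 1),
      ((1 + X : Polynomial ℤ)).coeff j *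
        (((1 - X ^ 2 : Polynomial ℤ)) ^ a).coeff (2 * m + 1 - j)
      = (-1 : ℤ) ^ m * a.choose m := by
    rw [Finset.sum_eq_single 1]
    · rw [show 2 * m + 1 - 1 = 2 * m from rfl, coeff_one_sub_X_sq_pow]
      simp [coeff_one]
    · intro j hj hj1
      rcases Nat.eq_zero_or_pos j with rfl | hjpos
      · rw [show 2 * m + 1 - 0 = 2 * m + 1 from rfl, coeff_one_sub_X_sq_pow_odd]
        ring
      · have : ((1 + X : Polynomial ℤ)).coeff j = 0 := by
          rw [coeff_add, coeff_one, coeff_X]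
          rw [if_neg (by omega), if_neg (by omega), add_zero]
        rw [this, zero_mul]
    · intro h; simp at h
  rw [hL, hR] at hc
  exact hc
end

section
/- Let $m$ be an odd integer with $m \ge 3$ and let $k$ be a nonnegative integer with $2k+1 \le m-2$. Then $\sum_{j=0}^{2k+1} (-1)^{j+k} \binom{2k+1}{j}\binom{m-2k-3}{\frac{m-3}{2}-j}\binom{m-2}{2k+1} = \binom{\frac{m-3}{2}}{k}\binom{m-2}{\frac{m-1}{2}}$. -/
open Polynomial Finset

namespace EquiAux

noncomputable def g (a d : ℕ) : Polynomial ℤ := (1 - X^2)^a * (1 + X)^(2*d+1)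

/-- symmetric with sign ε about degree N, and vanishing above N -/
def Sym (N : ℕ) (ε : ℤ) (p : Polynomial ℤ) : Prop :=
  (∀ r s, r + s = N → p.coeff r = ε * p.coeff s) ∧ ∀ r, N < r → p.coeff r = 0

lemma sym_base (d : ℕ) : Sym (2*d+1) 1 ((1 + X)^(2*d+1) : ℤ[X]) := by
  constructor
  · intro r s hrs
    rw [coeff_one_add_X_pow, coeff_one_add_X_pow, one_mul]
    have hr : r ≤ 2*d+1 := by omega
    have : s = (2*d+1) - r := by omega
    rw [this, Nat.choose_symm hr]
  · intro r hr
    rw [coeff_one_add_X_pow]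
    simp [Nat.choose_eq_zero_of_lt hr]

lemma coeff_one_sub_sq_mul (p : ℤ[X]) (r : ℕ) :
    ((1 - X^2) * p).coeff r = p.coeff r - if 2 ≤ r then p.coeff (r - 2) else 0 := by
  rw [sub_mul, one_mul, coeff_sub]
  congr 1
  rcases Nat.lt_or_ge r 2 with h | h
  · rw [if_neg (by omega)]
    interval_cases r <;> simp [coeff_X_pow_mul']
  · rw [if_pos h]
    have : r = (r - 2) + 2 := by omega
    conv_lhs => rw [this]
    rw [coeff_X_pow_mul]

lemma sym_step {N : ℕ} {ε : ℤ} {p : ℤ[X]} (h : Sym N ε p) :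
    Sym (N+2) (-ε) ((1 - X^2) * p) := by
  obtain ⟨hs, hv⟩ := h
  constructor
  · intro r s hrs
    rw [coeff_one_sub_sq_mul, coeff_one_sub_sq_mul]
    by_cases hr2 : 2 ≤ r <;> by_cases hs2 : 2 ≤ s
    · rw [if_pos hr2, if_pos hs2]
      rw [hs r (s-2) (by omega), hs (r-2) s (by omega)]
      ring
    · rw [if_pos hr2, if_neg hs2, sub_zero]
      rw [hv r (by omega), hs (r-2) s (by omega)]
      ring
    · rw [if_neg hr2, if_pos hs2, sub_zero]
      rw [hv s (by omega), hs r (s-2) (by omega)]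
      ring
    · have hN : N = 0 := by omega
      have hr1 : r = 1 := by omega
      have hs1 : s = 1 := by omega
      subst hN hr1 hs1
      simp only [show ¬(2 ≤ 1) by omega, if_false, sub_zero]
      rw [hv 1 (by omega)]
      ring
  · intro r hr
    rw [coeff_one_sub_sq_mul, if_pos (by omega : 2 ≤ r)]
    rw [hv r (by omega), hv (r-2) (by omega)]
    ring

lemma g_succ (a d : ℕ) : g (a+1) d = (1 - X^2) * g a d := by
  unfold g; rw [pow_succ]; ring

lemma sym_g (a d : ℕ) : Sym (2*a + 2*d + 1) ((-1)^a) (g a d) := by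
  induction a with
  | zero => simpa [g] using sym_base d
  | succ a ih =>
      have := sym_step ih
      rw [← g_succ] at this
      have harith : 2*a + 2*d + 1 + 2 = 2*(a+1) + 2*d + 1 := by ring
      have hsign : -((-1:ℤ)^a) = (-1)^(a+1) := by rw [pow_succ]; ring
      rw [harith, hsign] at this
      exact this

lemma ode (a d : ℕ) :
    (1 - X^2) * derivative (g a d) =
      (((2*d+1 : ℕ) : ℤ[X]) - ((2*a+2*d+1 : ℕ) : ℤ[X]) * X) * g a d := by
  induction a with
  | zero =>
      have h0 : g 0 d = (1 + X)^(2*d+1) := by unfold g; simp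
      rw [h0, derivative_pow]
      simp only [derivative_add, derivative_one, derivative_X, zero_add, mul_one]
      have hpow : ((1:ℤ[X]) + X)^(2*d+1) = (1+X)^(2*d) * (1+X) := by rw [pow_succ]
      rw [hpow, Nat.add_sub_cancel]
      simp only [Polynomial.C_add, Polynomial.C_mul, Polynomial.C_1, Polynomial.C_eq_natCast,
        map_ofNat]
      push_cast
      ring
  | succ a ih =>
      rw [g_succ, derivative_mul]
      have hd : derivative ((1:ℤ[X]) - X^2) = Polynomial.C (-2) * X := by
        simp [derivative_X_pow]
        try ring
      rw [hd]
      have hC2 : (Polynomial.C (-2) : ℤ[X]) = -2 := by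
        simp
      calc (1 - X^2) * (Polynomial.C (-2) * X * g a d + (1 - X^2) * derivative (g a d))
          = Polynomial.C (-2) * X * ((1-X^2) * g a d)
              + (1 - X^2) * ((1-X^2) * derivative (g a d)) := by ring
        _ = Polynomial.C (-2) * X * ((1-X^2) * g a d)
              + (1 - X^2) * ((((2*d+1 : ℕ) : ℤ[X]) - ((2*a+2*d+1 : ℕ) : ℤ[X]) * X) * g a d) := by rw [ih]
        _ = (((2*d+1 : ℕ) : ℤ[X]) - ((2*(a+1)+2*d+1 : ℕ) : ℤ[X]) * X) * ((1 - X^2) * g a d) := by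
              rw [hC2]
              push_cast
              try ring
        _ = _ := by rw [← g_succ]

lemma ecoeff (a d : ℕ) (hpos : 1 ≤ a + d) :
    ((a:ℤ)+(d:ℤ)+2) * (g a d).coeff (a+d+2) =
      (2*(d:ℤ)+1) * (g a d).coeff (a+d+1) - ((a:ℤ)+(d:ℤ)+1) * (g a d).coeff (a+d) := by
  have h := congrArg (fun q => Polynomial.coeff q (a+d+1)) (ode a d)
  have hL : ((1 - X^2) * derivative (g a d)).coeff (a+d+1)
      = ((a:ℤ)+(d:ℤ)+2) * (g a d).coeff (a+d+2) - ((a:ℤ)+(d:ℤ)) * (g a d).coeff (a+d) := by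
    rw [coeff_one_sub_sq_mul]
    rw [if_pos (by omega : 2 ≤ a+d+1)]
    have h1 : (derivative (g a d)).coeff (a+d+1) = (g a d).coeff (a+d+2) * ((a:ℤ)+(d:ℤ)+2) := by
      rw [coeff_derivative]
      push_cast
      ring
    have h2 : (derivative (g a d)).coeff (a+d+1-2) = (g a d).coeff (a+d) * ((a:ℤ)+(d:ℤ)) := by
      · rw [show a+d+1-2 = (a+d-1) by omega]
        rw [coeff_derivative]
        rw [show a+d-1+1 = a+d by omega]
        have : ((a+d-1 : ℕ) : ℤ) + 1 = (a:ℤ) + (d:ℤ) := by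
          push_cast [Nat.cast_sub (by omega : 1 ≤ a + d)]
          ring
        rw [this]
    rw [h1, h2]; ring
  have hR : ((((2*d+1 : ℕ) : ℤ[X]) - ((2*a+2*d+1 : ℕ) : ℤ[X]) * X) * (g a d)).coeff (a+d+1)
      = (2*(d:ℤ)+1) * (g a d).coeff (a+d+1) - (2*(a:ℤ)+2*(d:ℤ)+1) * (g a d).coeff (a+d) := by
    rw [sub_mul, coeff_sub]
    congr 1
    · rw [← Polynomial.C_eq_natCast, coeff_C_mul]
      push_cast
      try ring
    · rw [← Polynomial.C_eq_natCast, mul_assoc, coeff_C_mul, coeff_X_mul]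
      push_cast
      try ring
  rw [hL, hR] at h
  linarith [h]

lemma prod_rel (a d : ℕ) : (1 + X) * g (a+1) d = (1 - X) * g a (d+1) := by
  unfold g
  have e1 : ((1:ℤ[X]) - X^2)^(a+1) = (1-X^2)^a * (1-X^2) := pow_succ _ _
  have e2 : ((1:ℤ[X]) + X)^(2*(d+1)+1) = (1+X)^(2*d+1) * (1+X)^2 := by
    rw [← pow_add]
    congr 1
    try ring
  rw [e1, e2]
  ring

lemma r1 (a d : ℕ) (ha : Odd a) :
    (g (a+1) d).coeff (a+d+1) = -(g a (d+1)).coeff (a+d+1) := by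
  have h := congrArg (fun q => Polynomial.coeff q (a+d+2)) (prod_rel a d)
  have hL : ((1 + X) * g (a+1) d).coeff (a+d+2)
      = (g (a+1) d).coeff (a+d+2) + (g (a+1) d).coeff (a+d+1) := by
    rw [add_mul, one_mul, coeff_add, coeff_X_mul]
  have hR : ((1 - X) * g a (d+1)).coeff (a+d+2)
      = (g a (d+1)).coeff (a+d+2) - (g a (d+1)).coeff (a+d+1) := by
    rw [sub_mul, one_mul, coeff_sub, coeff_X_mul]
  rw [hL, hR] at h
  have sp : (g (a+1) d).coeff (a+d+2) = (-1:ℤ)^(a+1) * (g (a+1) d).coeff (a+d+1) :=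
    (sym_g (a+1) d).1 (a+d+2) (a+d+1) (by ring)
  have sq : (g a (d+1)).coeff (a+d+2) = (-1:ℤ)^a * (g a (d+1)).coeff (a+d+1) :=
    (sym_g a (d+1)).1 (a+d+2) (a+d+1) (by ring)
  rw [Even.neg_one_pow (Odd.add_one ha), one_mul] at sp
  rw [Odd.neg_one_pow ha] at sq
  rw [sp] at h
  rw [sq] at h
  linarith [h]

lemma r2 (a d : ℕ) (ha : Even a) :
    ((a:ℤ) + 2*(d:ℤ) + 3) * (g (a+1) d).coeff (a+d+1)
      = ((a:ℤ) + 1) * (g a (d+1)).coeff (a+d+1) := by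
  have hp2 := ecoeff (a+1) d (by omega)
  rw [show a+1+d+2 = a+d+3 by omega, show a+1+d+1 = a+d+2 by omega,
      show a+1+d = a+d+1 by omega] at hp2
  push_cast at hp2
  have hq2 := ecoeff a (d+1) (by omega)
  rw [show a+(d+1)+2 = a+d+3 by omega, show a+(d+1)+1 = a+d+2 by omega,
      show a+(d+1) = a+d+1 by omega] at hq2
  push_cast at hq2
  have hodd : Odd (a+1) := Even.add_one ha
  have sp1 : (g (a+1) d).coeff (a+d+2) = (-1:ℤ)^(a+1) * (g (a+1) d).coeff (a+d+1) :=
    (sym_g (a+1) d).1 (a+d+2) (a+d+1) (by ring)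
  have sp2 : (g (a+1) d).coeff (a+d) = (-1:ℤ)^(a+1) * (g (a+1) d).coeff (a+d+3) :=
    (sym_g (a+1) d).1 (a+d) (a+d+3) (by ring)
  rw [Odd.neg_one_pow hodd] at sp1 sp2
  have sq1 : (g a (d+1)).coeff (a+d+2) = (-1:ℤ)^a * (g a (d+1)).coeff (a+d+1) :=
    (sym_g a (d+1)).1 (a+d+2) (a+d+1) (by ring)
  have sq2 : (g a (d+1)).coeff (a+d) = (-1:ℤ)^a * (g a (d+1)).coeff (a+d+3) :=
    (sym_g a (d+1)).1 (a+d) (a+d+3) (by ring)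
  rw [Even.neg_one_pow ha, one_mul] at sq1 sq2
  have h := congrArg (fun q => Polynomial.coeff q (a+d+1)) (prod_rel a d)
  have hL : ((1 + X) * g (a+1) d).coeff (a+d+1)
      = (g (a+1) d).coeff (a+d+1) + (g (a+1) d).coeff (a+d) := by
    rw [add_mul, one_mul, coeff_add, coeff_X_mul]
  have hR : ((1 - X) * g a (d+1)).coeff (a+d+1)
      = (g a (d+1)).coeff (a+d+1) - (g a (d+1)).coeff (a+d) := by
    rw [sub_mul, one_mul, coeff_sub, coeff_X_mul]
  rw [hL, hR] at h

  have h2 : (2:ℤ) * (((a:ℤ) + 2*(d:ℤ) + 3) * (g (a+1) d).coeff (a+d+1))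
      = 2 * (((a:ℤ) + 1) * (g a (d+1)).coeff (a+d+1)) := by
    linear_combination ((a:ℤ)+(d:ℤ)+3) * h - ((a:ℤ)+(d:ℤ)+3) * sp2 + hp2
      + (2*(d:ℤ)+1) * sp1 - ((a:ℤ)+(d:ℤ)+3) * sq2 - hq2 - (2*(d:ℤ)+3) * sq1
  linarith [h2]

lemma chid (c k : ℕ) :
    ((2*c+1).choose (2*k+2) : ℤ) * (c.choose k : ℤ)
      = ((2*c+1).choose (2*k+1) : ℤ) * (c.choose (k+1) : ℤ) := by
  rcases Nat.lt_or_ge k c with hkc | hkc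
  · obtain ⟨u, hu⟩ : ∃ u, c = k+1+u := ⟨c-k-1, by omega⟩
    subst hu
    have h1 := Nat.choose_succ_right_eq (2*(k+1+u)+1) (2*k+1)
    rw [show 2*(k+1+u)+1-(2*k+1) = 2*u+2 by omega, show 2*k+1+1 = 2*k+2 by omega] at h1
    have h2 := Nat.choose_succ_right_eq (k+1+u) k
    rw [show k+1+u-k = u+1 by omega] at h2
    have h1' : ((2*(k+1+u)+1).choose (2*k+2) : ℤ) * (2*(k:ℤ)+2)
        = ((2*(k+1+u)+1).choose (2*k+1) : ℤ) * (2*(u:ℤ)+2) := by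
      exact_mod_cast h1
    have h2' : ((k+1+u).choose (k+1) : ℤ) * ((k:ℤ)+1)
        = ((k+1+u).choose k : ℤ) * ((u:ℤ)+1) := by
      exact_mod_cast h2
    have hne : ((2*(k:ℤ)+2) * ((k:ℤ)+1)) ≠ 0 := by positivity
    apply mul_left_cancel₀ hne
    linear_combination ((k:ℤ)+1) * ((k+1+u).choose k : ℤ) * h1'
      - (2*(k:ℤ)+2) * ((2*(k+1+u)+1).choose (2*k+1) : ℤ) * h2'
  · have hz : c.choose (k+1) = 0 := Nat.choose_eq_zero_of_lt (by omega)
    rcases Nat.lt_or_ge c k with hck | hck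
    · have hz2 : c.choose k = 0 := Nat.choose_eq_zero_of_lt hck
      rw [hz, hz2]
      push_cast
      ring
    · have hk2 : k = c := by omega
      subst hk2
      have hz3 : (2*k+1).choose (2*k+2) = 0 := Nat.choose_eq_zero_of_lt (by omega)
      rw [hz, hz3]
      push_cast
      ring

lemma main_odd (k : ℕ) : ∀ d c : ℕ, c = 2*k+1+d →
    ((2*c+1).choose (2*k+1) : ℤ) * (g (2*k+1) d).coeff c
      = (-1)^k * (c.choose k : ℤ) * ((2*c+1).choose (c+1) : ℤ) := by
  induction k with
  | zero =>
      intro d c hc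
      have h := r2 0 d (by exact Even.zero)
      rw [show (0:ℕ)+d+1 = d+1 by omega, show (0:ℕ)+1 = 1 by omega] at h
      push_cast at h
      have hg0 : (g 0 (d+1)).coeff (d+1) = ((2*(d+1)+1).choose (d+1) : ℤ) := by
        have : g 0 (d+1) = (1 + X)^(2*(d+1)+1) := by unfold g; simp
        rw [this, coeff_one_add_X_pow]
      rw [hg0] at h
      -- h : (2d+3) * (g 1 d).coeff (d+1) = 1 * C(2d+3, d+1)
      have hc' : c = d+1 := by omega
      subst hc'
      rw [show 2*0+1 = 1 by omega]
      rw [show (2*(d+1)+1).choose 1 = 2*(d+1)+1 from Nat.choose_one_right _]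
      have hsym : (2*(d+1)+1).choose (d+1+1) = (2*(d+1)+1).choose (d+1) := by
        rw [← Nat.choose_symm (by omega : d+1+1 ≤ 2*(d+1)+1), show 2*(d+1)+1-(d+1+1) = d+1 by omega]
      rw [hsym]
      rw [show (d+1).choose 0 = 1 from Nat.choose_zero_right _]
      push_cast
      linarith [h]
  | succ k ih =>
      intro d c hc
      have hcge : 1 ≤ c := by omega
      -- recurrences
      have h2 := r2 (2*k+2) d (by exact ⟨k+1, by ring⟩)
      rw [show 2*k+2+d+1 = c by omega] at h2
      have h1 := r1 (2*k+1) (d+1) ⟨k, by ring⟩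
      rw [show 2*k+1+(d+1)+1 = c by omega] at h1
      rw [show (2*k+1+1 : ℕ) = 2*k+2 by omega] at h1
      have hih := ih (d+2) c (by omega)
      -- abbreviations
      set P : ℤ := (g (2*k+2+1) d).coeff c with hP
      set Q : ℤ := (g (2*k+1) (d+2)).coeff c with hQ
      rw [h1] at h2
      -- h2 : (2k+2 + 2d + 3) * P = (2k+3) * (−Q)? careful: h2 RHS has coeff of g (2k+2) (d+1); h1 : that = −Q
      -- goal
      rw [show 2*(k+1)+1 = 2*k+2+1 by omega]
      -- choose identities
      have hN1 := Nat.choose_succ_right_eq (2*c+1) (2*k+2)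
      rw [show 2*c+1-(2*k+2) = 2*k+2*d+5 by omega] at hN1
      have hN1' : ((2*c+1).choose (2*k+2+1) : ℤ) * (2*(k:ℤ)+3)
          = ((2*c+1).choose (2*k+2) : ℤ) * (2*(k:ℤ)+2*(d:ℤ)+5) := by
        exact_mod_cast hN1
      have hN2 := chid c k
      have hMne : ((2*(k:ℤ)+2*(d:ℤ)+5) * ((2*c+1).choose (2*k+1) : ℤ)) ≠ 0 := by
        have : 0 < (2*c+1).choose (2*k+1) := Nat.choose_pos (by omega)
        positivity
      apply mul_left_cancel₀ hMne
      push_cast at h2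
      rw [pow_succ]
      linear_combination ((2*c+1).choose (2*k+1) : ℤ) * ((2*c+1).choose (2*k+2+1) : ℤ) * h2
      - ((2*c+1).choose (2*k+1) : ℤ) * Q * hN1'
      - (2*(k:ℤ)+2*(d:ℤ)+5) * (-1:ℤ)^k * ((2*c+1).choose (c+1) : ℤ) * hN2
      - (2*(k:ℤ)+2*(d:ℤ)+5) * ((2*c+1).choose (2*k+2) : ℤ) * hih

lemma coeff_one_sub_pow (A j : ℕ) : (((1:ℤ[X]) - X)^A).coeff j = (-1)^j * (A.choose j : ℤ) := by
  have hrw : ((1:ℤ[X]) - X)^A = (-1:ℤ[X])^A * (X + Polynomial.C (-1))^A := by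
    rw [← mul_pow]
    congr 1
    simp
    ring
  rw [hrw]
  have hC : ((-1:ℤ[X])^A) = Polynomial.C ((-1:ℤ)^A) := by
    simp
  rw [hC, coeff_C_mul, coeff_X_add_C_pow]
  by_cases hj : j ≤ A
  · have hs : (-1:ℤ)^A * (-1)^(A-j) = (-1)^j := by
      rw [← pow_add]
      rw [show A + (A-j) = j + 2*(A-j) by omega]
      rw [pow_add, pow_mul]
      norm_num
    calc (-1:ℤ)^A * ((-1)^(A-j) * (A.choose j : ℤ)) = ((-1:ℤ)^A * (-1)^(A-j)) * (A.choose j : ℤ) := by ring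
      _ = (-1)^j * (A.choose j : ℤ) := by rw [hs]
  · rw [Nat.choose_eq_zero_of_lt (by omega)]
    push_cast
    ring

lemma coeff_eq_sum (A B c : ℕ) : (((1 - X)^A * (1 + X)^B : ℤ[X])).coeff c
    = ∑ j ∈ range (c+1), (-1)^j * (A.choose j : ℤ) * (B.choose (c - j) : ℤ) := by
  rw [coeff_mul, Finset.Nat.sum_antidiagonal_eq_sum_range_succ_mk]
  apply Finset.sum_congr rfl
  intro j hj
  simp only
  rw [coeff_one_sub_pow, coeff_one_add_X_pow]
  try ring

lemma split (a d : ℕ) : ((1:ℤ[X]) - X)^a * (1 + X)^(a + (2*d+1)) = g a d := by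
  unfold g
  rw [pow_add, ← mul_assoc, ← mul_pow]
  have : ((1:ℤ[X]) - X) * (1 + X) = 1 - X^2 := by ring
  rw [this]

end EquiAux


open EquiAux in
theorem equilateral_binomial_identity (m k : ℕ) (hm3 : 3 ≤ m) (hmodd : Odd m)
    (hk : 2 * k + 1 ≤ m - 2) :
    ∑ j ∈ Finset.range (2 * k + 2),
        (-1 : ℤ) ^ (j + k) * ((2 * k + 1).choose j) *
          (if j ≤ (m - 3) / 2 then ((m - 2 * k - 3).choose ((m - 3) / 2 - j) : ℤ) else 0) *
          ((m - 2).choose (2 * k + 1)) =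
      ((m - 3) / 2).choose k * ((m - 2).choose ((m - 1) / 2)) := by
  obtain ⟨n, hm⟩ : ∃ n, m = 2*n+3 := by
    obtain ⟨t, ht⟩ := hmodd
    exact ⟨t-1, by omega⟩
  subst hm
  have hkn : k ≤ n := by omega
  simp only [show 2*n+3-2 = 2*n+1 from by omega, show (2*n+3-3)/2 = n from by omega,
      show (2*n+3-1)/2 = n+1 from by omega, show 2*n+3-2*k-3 = 2*(n-k) from by omega]
  have hA : (∑ j ∈ Finset.range (2 * k + 2),
        (-1 : ℤ) ^ (j + k) * ((2 * k + 1).choose j) *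
          (if j ≤ n then ((2*(n-k)).choose (n - j) : ℤ) else 0) *
          ((2*n+1).choose (2 * k + 1)))
      = (-1:ℤ)^k * ((2*n+1).choose (2*k+1) : ℤ) *
          ∑ j ∈ Finset.range (n+1),
            (-1:ℤ)^j * ((2*k+1).choose j : ℤ) * ((2*(n-k)).choose (n-j) : ℤ) := by
    have e1 : ∀ j, ((-1:ℤ)^(j+k) * ((2*k+1).choose j : ℤ) *
          (if j ≤ n then ((2*(n-k)).choose (n-j) : ℤ) else 0) * ((2*n+1).choose (2*k+1) : ℤ))
        = ((-1:ℤ)^k * ((2*n+1).choose (2*k+1) : ℤ)) *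
            ((-1:ℤ)^j * ((2*k+1).choose j : ℤ) *
              (if j ≤ n then ((2*(n-k)).choose (n-j) : ℤ) else 0)) := by
      intro j
      rw [pow_add]
      ring
    rw [Finset.sum_congr rfl (fun j _ => e1 j), ← Finset.mul_sum]
    congr 1
    have hbig1 : ∑ j ∈ Finset.range (2*k+2), ((-1:ℤ)^j * ((2*k+1).choose j : ℤ) *
          (if j ≤ n then ((2*(n-k)).choose (n-j) : ℤ) else 0))
        = ∑ j ∈ Finset.range (2*k+2+(n+1)), ((-1:ℤ)^j * ((2*k+1).choose j : ℤ) *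
          (if j ≤ n then ((2*(n-k)).choose (n-j) : ℤ) else 0)) := by
      apply Finset.sum_subset (Finset.range_subset_range.2 (by omega))
      intro j hj hnj
      simp only [Finset.mem_range, not_lt] at hnj
      rw [Nat.choose_eq_zero_of_lt (by omega : 2*k+1 < j)]
      push_cast
      ring
    have hbig2 : ∑ j ∈ Finset.range (n+1), ((-1:ℤ)^j * ((2*k+1).choose j : ℤ) *
          (if j ≤ n then ((2*(n-k)).choose (n-j) : ℤ) else 0))
        = ∑ j ∈ Finset.range (2*k+2+(n+1)), ((-1:ℤ)^j * ((2*k+1).choose j : ℤ) *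
          (if j ≤ n then ((2*(n-k)).choose (n-j) : ℤ) else 0)) := by
      apply Finset.sum_subset (Finset.range_subset_range.2 (by omega))
      intro j hj hnj
      simp only [Finset.mem_range, not_lt] at hnj
      rw [if_neg (by omega : ¬ j ≤ n)]
      ring
    rw [hbig1, ← hbig2]
    apply Finset.sum_congr rfl
    intro j hj
    simp only [Finset.mem_range] at hj
    rw [if_pos (by omega : j ≤ n)]
  rw [hA]
  rcases Nat.lt_or_ge (2*k) n with hlt | hge
  · -- Case 1 : 2k < n
    have hcoe : (∑ j ∈ Finset.range (n+1),
          (-1:ℤ)^j * ((2*k+1).choose j : ℤ) * ((2*(n-k)).choose (n-j) : ℤ))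
        = (g (2*k+1) (n-2*k-1)).coeff n := by
      have h0 := coeff_eq_sum (2*k+1) (2*(n-k)) n
      rw [show 2*(n-k) = (2*k+1) + (2*(n-2*k-1)+1) from by omega, split] at h0
      rw [show (2*k+1) + (2*(n-2*k-1)+1) = 2*(n-k) from by omega] at h0
      exact h0.symm
    rw [hcoe]
    have hmain := main_odd k (n-2*k-1) n (by omega)
    have hsq : (-1:ℤ)^k * (-1:ℤ)^k = 1 := by
      rw [← pow_add]
      exact Even.neg_one_pow ⟨k, by ring⟩
    calc (-1:ℤ)^k * ((2*n+1).choose (2*k+1) : ℤ) * (g (2*k+1) (n-2*k-1)).coeff n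
        = (-1:ℤ)^k * (((2*n+1).choose (2*k+1) : ℤ) * (g (2*k+1) (n-2*k-1)).coeff n) := by ring
      _ = (-1:ℤ)^k * ((-1)^k * (n.choose k : ℤ) * ((2*n+1).choose (n+1) : ℤ)) := by rw [hmain]
      _ = ((n.choose k : ℤ)) * ((2*n+1).choose (n+1) : ℤ) := by
          rw [show (-1:ℤ)^k * ((-1)^k * (n.choose k : ℤ) * ((2*n+1).choose (n+1) : ℤ))
            = ((-1:ℤ)^k * (-1)^k) * ((n.choose k : ℤ) * ((2*n+1).choose (n+1) : ℤ)) from by ring,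
            hsq, one_mul]
  · -- Case 2 : n ≤ 2k
    have hrefl : (∑ j ∈ Finset.range (n+1),
          (-1:ℤ)^j * ((2*k+1).choose j : ℤ) * ((2*(n-k)).choose (n-j) : ℤ))
        = (-1:ℤ)^n * ∑ j ∈ Finset.range (n+1),
            (-1:ℤ)^j * ((2*(n-k)).choose j : ℤ) * ((2*k+1).choose (n-j) : ℤ) := by
      rw [Finset.mul_sum]
      rw [← Finset.sum_range_reflect
        (fun j => (-1:ℤ)^j * ((2*k+1).choose j : ℤ) * ((2*(n-k)).choose (n-j) : ℤ)) (n+1)]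
      apply Finset.sum_congr rfl
      intro j hj
      simp only [Finset.mem_range] at hj
      rw [show n+1-1-j = n-j from by omega, show n-(n-j) = j from by omega]
      have hsgn : (-1:ℤ)^(n-j) = (-1)^n * (-1)^j := by
        have h1 : (-1:ℤ)^(n-j) * (-1)^j = (-1)^n := by
          rw [← pow_add, show n-j+j = n from by omega]
        have h2 : ((-1:ℤ)^j) * ((-1:ℤ)^j) = 1 := by
          rw [← pow_add]
          exact Even.neg_one_pow ⟨j, by ring⟩
        calc (-1:ℤ)^(n-j) = (-1:ℤ)^(n-j) * (((-1:ℤ)^j) * ((-1:ℤ)^j)) := by rw [h2, mul_one]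
          _ = ((-1:ℤ)^(n-j) * (-1)^j) * (-1)^j := by ring
          _ = (-1)^n * (-1)^j := by rw [h1]
      rw [hsgn]
      ring
    rw [hrefl]
    rcases Nat.eq_or_lt_of_le hkn with hke | hklt
    · -- k = n
      subst hke
      have hsum : (∑ j ∈ Finset.range (k+1),
            (-1:ℤ)^j * ((2*(k-k)).choose j : ℤ) * ((2*k+1).choose (k-j) : ℤ))
          = ((2*k+1).choose k : ℤ) := by
        rw [Finset.sum_eq_single 0]
        · simp
        · intro j hj hj0
          rw [show k-k = 0 from by omega, Nat.choose_eq_zero_of_lt (by omega : 0 < j)]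
          push_cast
          ring
        · intro h
          exact absurd (Finset.mem_range.2 (by omega)) h
      rw [hsum]
      have hsq : (-1:ℤ)^k * (-1:ℤ)^k = 1 := by
        rw [← pow_add]
        exact Even.neg_one_pow ⟨k, by ring⟩
      rw [show (2*k+1).choose (k+1) = (2*k+1).choose k from by
        rw [← Nat.choose_symm (by omega : k+1 ≤ 2*k+1), show 2*k+1-(k+1) = k from by omega]]
      simp only [Nat.choose_self, Nat.cast_one]
      linear_combination ((2*k+1).choose k : ℤ) * hsq
    · -- k < n ≤ 2k
      set e := n-k-1 with he
      have hcoe : (∑ j ∈ Finset.range (n+1),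
            (-1:ℤ)^j * ((2*e+1+1).choose j : ℤ) * ((2*k+1).choose (n-j) : ℤ))
          = (g (2*e+1+1) (2*k-n)).coeff n := by
        have h0 := coeff_eq_sum (2*e+1+1) (2*k+1) n
        rw [show 2*k+1 = (2*e+1+1) + (2*(2*k-n)+1) from by omega, split] at h0
        rw [show (2*e+1+1) + (2*(2*k-n)+1) = 2*k+1 from by omega] at h0
        exact h0.symm
      simp only [show 2*(n-k) = 2*e+1+1 from by omega]
      rw [hcoe]
      have hr1 := r1 (2*e+1) (2*k-n) ⟨e, by ring⟩
      rw [show 2*e+1+(2*k-n)+1 = n from by omega] at hr1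
      rw [hr1]
      have hmain := main_odd e (2*k-n+1) n (by omega)
      have hsymA : ((2*n+1).choose (2*e+1) : ℤ) = ((2*n+1).choose (2*k+2) : ℤ) := by
        have := Nat.choose_symm (by omega : 2*k+2 ≤ 2*n+1)
        rw [show 2*n+1-(2*k+2) = 2*e+1 from by omega] at this
        exact_mod_cast this
      have hsymB : (n.choose e : ℤ) = (n.choose (k+1) : ℤ) := by
        have := Nat.choose_symm (by omega : k+1 ≤ n)
        rw [show n-(k+1) = e from by omega] at this
        exact_mod_cast this
      have hsgn3 : (-1:ℤ)^k * ((-1)^n * (-1)^e) = -1 := by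
        rw [← pow_add, ← pow_add]
        exact Odd.neg_one_pow ⟨n-1, by omega⟩
      have hA1ne : ((2*n+1).choose (2*e+1) : ℤ) ≠ 0 := by
        have : 0 < (2*n+1).choose (2*e+1) := Nat.choose_pos (by omega)
        positivity
      apply mul_left_cancel₀ hA1ne
      calc ((2*n+1).choose (2*e+1) : ℤ) * ((-1:ℤ)^k * ((2*n+1).choose (2*k+1) : ℤ) *
              ((-1:ℤ)^n * -(g (2*e+1) (2*k-n+1)).coeff n))
          = (-1:ℤ)^k * (-1)^n * ((2*n+1).choose (2*k+1) : ℤ) *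
              -(((2*n+1).choose (2*e+1) : ℤ) * (g (2*e+1) (2*k-n+1)).coeff n) := by ring
        _ = (-1:ℤ)^k * (-1)^n * ((2*n+1).choose (2*k+1) : ℤ) *
              -((-1)^e * (n.choose e : ℤ) * ((2*n+1).choose (n+1) : ℤ)) := by rw [hmain]
        _ = ((-1:ℤ)^k * ((-1)^n * (-1)^e)) *
              -(((2*n+1).choose (2*k+1) : ℤ) * ((n.choose e : ℤ) * ((2*n+1).choose (n+1) : ℤ))) := by
            ring
        _ = ((2*n+1).choose (2*k+1) : ℤ) * ((n.choose e : ℤ) * ((2*n+1).choose (n+1) : ℤ)) := by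
            rw [hsgn3]
            ring
        _ = ((2*n+1).choose (2*k+1) : ℤ) * ((n.choose (k+1) : ℤ) * ((2*n+1).choose (n+1) : ℤ)) := by
            rw [hsymB]
        _ = ((2*n+1).choose (2*k+2) : ℤ) * ((n.choose k : ℤ) * ((2*n+1).choose (n+1) : ℤ)) := by
            linear_combination (-((2*n+1).choose (n+1) : ℤ)) * (chid n k)
        _ = ((2*n+1).choose (2*e+1) : ℤ) * ((n.choose k : ℤ) * ((2*n+1).choose (n+1) : ℤ)) := by
            rw [hsymA]
end

section
/- Let $m \ge 4$, $I = \{3,\ldots,m\}$, and let $\alpha \in \mathbb{R}_{>0}^m$ be generic with $\alpha_1 > \alpha_2$. If $J \subseteq I$ is not triangular and satisfies $-(\alpha_1+\alpha_2) < \ell_J < \alpha_2 - \alpha_1$, then the complement $J' = I \setminus J$ is triangular. Conversely, if $J' \subseteq I$ is triangular then its complement $J = I \setminus J'$ is not triangular and satisfies $-(\alpha_1+\alpha_2) < \ell_J < \alpha_2 - \alpha_1$. -/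
/-- A family of positive reals indexed by `S` is *generic* if no `±1`-signed sum vanishes. -/
def IsGeneric (β : ℕ → ℝ) (S : Finset ℕ) : Prop :=
  ∀ ε : ℕ → ℝ, (∀ i ∈ S, ε i = 1 ∨ ε i = -1) → ∑ i ∈ S, ε i * β i ≠ 0

/-- `ell α m J` is the signed sum `∑_{i∈J} α i - ∑_{i ∈ {3,…,m} \ J} α i`. -/
noncomputable def ell (α : ℕ → ℝ) (m : ℕ) (J : Finset ℕ) : ℝ :=
  ∑ i ∈ J, α i - ∑ i ∈ Finset.Icc 3 m \ J, α i

/-- A subset `J ⊆ {3,…,m}` is *triangular* for the weights `α` if `ell α m J > 0` and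
`α 1`, `α 2`, `ell α m J` satisfy the three triangle inequalities. -/
def Triangular (α : ℕ → ℝ) (m : ℕ) (J : Finset ℕ) : Prop :=
  J ⊆ Finset.Icc 3 m ∧ 0 < ell α m J ∧
    α 1 ≤ α 2 + ell α m J ∧ α 2 ≤ α 1 + ell α m J ∧ ell α m J ≤ α 1 + α 2

lemma ell_compl (α : ℕ → ℝ) (m : ℕ) {J : Finset ℕ} (hJ : J ⊆ Finset.Icc 3 m) :
    ell α m (Finset.Icc 3 m \ J) = - ell α m J := by
  unfold ell
  rw [Finset.sdiff_sdiff_self_left, Finset.inter_eq_right.mpr hJ]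
  ring

lemma gen_ne (m : ℕ) (hm : 4 ≤ m) (α : ℕ → ℝ)
    (hgen : IsGeneric α (Finset.Icc 1 m)) {J : Finset ℕ} (hJ : J ⊆ Finset.Icc 3 m)
    (s1 s2 : ℝ) (h1 : s1 = 1 ∨ s1 = -1) (h2 : s2 = 1 ∨ s2 = -1) :
    s1 * α 1 + s2 * α 2 + ell α m J ≠ 0 := by
  set ε : ℕ → ℝ := fun i => if i = 1 then s1 else if i = 2 then s2 else
    if i ∈ J then 1 else -1 with hε
  have key := hgen ε (by
    intro i _
    simp only [hε]
    split_ifs <;> simp [h1, h2])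
  have hsplit : Finset.Icc 1 m = insert 1 (insert 2 (Finset.Icc 3 m)) := by
    ext i; simp [Finset.mem_Icc, Finset.mem_insert]; omega
  have h1J : (1 : ℕ) ∉ J := fun h => by have := hJ h; simp [Finset.mem_Icc] at this
  have h2J : (2 : ℕ) ∉ J := fun h => by have := hJ h; simp [Finset.mem_Icc] at this
  have hsum : ∑ i ∈ Finset.Icc 1 m, ε i * α i = s1 * α 1 + s2 * α 2 + ell α m J := by
    rw [hsplit, Finset.sum_insert (by simp [Finset.mem_Icc]),
      Finset.sum_insert (by simp [Finset.mem_Icc])]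
    have : ∑ i ∈ Finset.Icc 3 m, ε i * α i = ell α m J := by
      rw [← Finset.sum_sdiff hJ]
      have hA : ∀ i ∈ Finset.Icc 3 m \ J, ε i * α i = -α i := by
        intro i hi
        simp only [Finset.mem_sdiff, Finset.mem_Icc] at hi
        simp only [hε]
        rw [if_neg (by omega), if_neg (by omega), if_neg hi.2]; ring
      have hB : ∀ i ∈ J, ε i * α i = α i := by
        intro i hi
        have hi3 := hJ hi; simp only [Finset.mem_Icc] at hi3
        simp only [hε]
        rw [if_neg (by omega), if_neg (by omega), if_pos hi]; ring
      rw [Finset.sum_congr rfl hA, Finset.sum_congr rfl hB, Finset.sum_neg_distrib]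
      unfold ell; ring
    rw [this]
    simp only [hε]; norm_num; ring
  rw [hsum] at key
  exact key

theorem triangular_complement (m : ℕ) (hm : 4 ≤ m)
    (α : ℕ → ℝ) (hpos : ∀ i ∈ Finset.Icc 1 m, 0 < α i)
    (hgen : IsGeneric α (Finset.Icc 1 m)) (h12 : α 2 < α 1) :
    (∀ J : Finset ℕ, J ⊆ Finset.Icc 3 m → ¬ Triangular α m J →
        -(α 1 + α 2) < ell α m J → ell α m J < α 2 - α 1 →
        Triangular α m (Finset.Icc 3 m \ J)) ∧
      (∀ J' : Finset ℕ, Triangular α m J' →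
        ¬ Triangular α m (Finset.Icc 3 m \ J') ∧
          -(α 1 + α 2) < ell α m (Finset.Icc 3 m \ J') ∧
          ell α m (Finset.Icc 3 m \ J') < α 2 - α 1) := by
  constructor
  · intro J hJ _ hlo hhi
    rw [Triangular, ell_compl α m hJ]
    refine ⟨Finset.sdiff_subset, by linarith, by linarith, by linarith, by linarith⟩
  · intro J' hT
    obtain ⟨hJ', hpos', ht1, ht2, ht3⟩ := hT
    have hc := ell_compl α m hJ'
    have hne1 := gen_ne m hm α hgen hJ' (-1) (-1) (by norm_num) (by norm_num)
    have hne2 := gen_ne m hm α hgen hJ' (-1) 1 (by norm_num) (by norm_num)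
    refine ⟨fun h => ?_, ?_, ?_⟩
    · rw [Triangular, hc] at h; linarith [h.2.1]
    · rw [hc]
      have : ell α m J' ≠ α 1 + α 2 := fun h => hne1 (by rw [h]; ring)
      have := lt_of_le_of_ne ht3 this
      linarith
    · rw [hc]
      have : ell α m J' ≠ α 1 - α 2 := fun h => hne2 (by rw [h]; ring)
      have h' : α 1 - α 2 < ell α m J' := lt_of_le_of_ne (by linarith) (Ne.symm this)
      linarith
end

section
/- Let $m \ge 4$, $I = \{3,\ldots,m\}$, let $\alpha \in \mathbb{R}_{>0}^m$ be generic with $\alpha_1 > \alpha_2$, and let $k_1,\ldots,k_m$ be nonnegative integers with $k_1 = k_2 = 0$ and $\sum_{i=1}^m k_i = m-3$. Let $\mathcal{S}(\alpha)$ be the family of all subsets $R \subseteq \{1,\ldots,m\}$ with $\sum_{i\in R}\alpha_i - \sum_{i\notin R}\alpha_i < 0$, and let $\mathcal{T}(\alpha)$ be the family of triangular subsets of $I$. Then $-\frac{1}{2}\sum_{R\in\mathcal{S}(\alpha)} (-1)^{|R| + \sum_{i\in R}k_i} = \sum_{J\in\mathcal{T}(\alpha)} (-1)^{(\sum_{i\in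 I\setminus J}k_i) + m - |J|}$. -/
/-- sign attached to a subset -/
noncomputable def sg (k : ℕ → ℕ) (J : Finset ℕ) : ℝ :=
  (-1) ^ (J.card + ∑ i ∈ J, k i)

open Classical in
/-- summand of the left-hand side -/
noncomputable def gf (α : ℕ → ℝ) (k : ℕ → ℕ) (m : ℕ) (R : Finset ℕ) : ℝ :=
  if ∑ i ∈ R, α i - ∑ i ∈ Finset.Icc 1 m \ R, α i < 0 then sg k R else 0

lemma sigma_ne {m : ℕ} {α : ℕ → ℝ} (hgen : IsGeneric α (Finset.Icc 1 m))
    {R : Finset ℕ} (hR : R ⊆ Finset.Icc 1 m) :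
    ∑ i ∈ R, α i - ∑ i ∈ Finset.Icc 1 m \ R, α i ≠ 0 := by
  classical
  have h := hgen (fun i => if i ∈ R then 1 else -1)
    (by intro i _; by_cases hi : i ∈ R <;> simp [hi])
  have e1 : ∑ i ∈ R, (if i ∈ R then (1:ℝ) else -1) * α i = ∑ i ∈ R, α i :=
    Finset.sum_congr rfl (fun i hi => by simp [hi])
  have e2 : ∑ i ∈ Finset.Icc 1 m \ R, (if i ∈ R then (1:ℝ) else -1) * α i
      = -∑ i ∈ Finset.Icc 1 m \ R, α i := by
    rw [← Finset.sum_neg_distrib]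
    exact Finset.sum_congr rfl (fun i hi => by
      have : i ∉ R := (Finset.mem_sdiff.1 hi).2
      simp [this])
  intro h0
  apply h
  rw [← Finset.sum_sdiff hR, e1, e2]
  linarith

lemma neg_one_pow_eq_neg_of_odd {x y : ℕ} (h : Odd (x + y)) :
    (-1 : ℝ) ^ x = -(-1 : ℝ) ^ y := by
  have h1 : (-1 : ℝ) ^ x * (-1 : ℝ) ^ y = -1 := by
    rw [← pow_add]; exact h.neg_one_pow
  rcases Nat.even_or_odd y with hy | hy
  · rw [hy.neg_one_pow] at h1 ⊢; linarith
  · rw [hy.neg_one_pow] at h1 ⊢; linarith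

open Classical in
theorem konno_takakura_eq_triangular (m : ℕ) (hm : 4 ≤ m)
    (α : ℕ → ℝ) (hpos : ∀ i ∈ Finset.Icc 1 m, 0 < α i)
    (hgen : IsGeneric α (Finset.Icc 1 m)) (h12 : α 2 < α 1)
    (k : ℕ → ℕ) (hk1 : k 1 = 0) (hk2 : k 2 = 0)
    (hksum : ∑ i ∈ Finset.Icc 1 m, k i = m - 3) :
    -(1 / 2 : ℝ) *
        ∑ R ∈ (Finset.Icc 1 m).powerset.filter
            (fun R => ∑ i ∈ R, α i - ∑ i ∈ Finset.Icc 1 m \ R, α i < 0),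
          (-1 : ℝ) ^ (R.card + ∑ i ∈ R, k i) =
      ∑ J ∈ (Finset.Icc 3 m).powerset.filter (fun J => Triangular α m J),
        (-1 : ℝ) ^ ((∑ i ∈ Finset.Icc 3 m \ J, k i) + m - J.card) := by
  classical
  have h2I : (2:ℕ) ∉ Finset.Icc 3 m := by simp
  have h1I : (1:ℕ) ∉ insert 2 (Finset.Icc 3 m) := by
    simp [Finset.mem_Icc]
  have hIcc : Finset.Icc 1 m = insert 1 (insert 2 (Finset.Icc 3 m)) := by
    ext x; simp [Finset.mem_Icc]; omega
  have ha : 0 < α 1 := hpos 1 (by simp [Finset.mem_Icc]; omega)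
  have hb : 0 < α 2 := hpos 2 (by simp [Finset.mem_Icc]; omega)
  have hkI : ∑ i ∈ Finset.Icc 3 m, k i = m - 3 := by
    rw [hIcc, Finset.sum_insert h1I, Finset.sum_insert h2I, hk1, hk2] at hksum
    omega
  have hI1 : Finset.Icc 3 m ⊆ Finset.Icc 1 m :=
    Finset.Icc_subset_Icc (by omega) le_rfl
  have hTot : ∑ i ∈ Finset.Icc 1 m, α i = α 1 + α 2 + ∑ i ∈ Finset.Icc 3 m, α i := by
    rw [hIcc, Finset.sum_insert h1I, Finset.sum_insert h2I]; ring
  have hcompl : ∀ R ⊆ Finset.Icc 1 m, ∑ i ∈ Finset.Icc 1 m \ R, α i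
      = ∑ i ∈ Finset.Icc 1 m, α i - ∑ i ∈ R, α i := by
    intro R hR; rw [eq_sub_iff_add_eq, Finset.sum_sdiff hR]
  -- per-J key identity
  have key : ∀ J ∈ (Finset.Icc 3 m).powerset,
      (gf α k m J + gf α k m (insert 2 J)) +
        (gf α k m (insert 1 J) + gf α k m (insert 1 (insert 2 J))) =
      (if Triangular α m J then sg k J else 0) +
        (if Triangular α m (Finset.Icc 3 m \ J) then sg k (Finset.Icc 3 m \ J) else 0) := by
    intro J hJ
    have hJs : J ⊆ Finset.Icc 3 m := Finset.mem_powerset.1 hJ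
    have h1J : 1 ∉ J := fun h => by have := hJs h; simp [Finset.mem_Icc] at this
    have h2J : 2 ∉ J := fun h => by have := hJs h; simp [Finset.mem_Icc] at this
    have h12J : 1 ∉ insert 2 J := by simp [h1J]
    have hsub0 : J ⊆ Finset.Icc 1 m := hJs.trans hI1
    have hsub2 : insert 2 J ⊆ Finset.Icc 1 m :=
      Finset.insert_subset (by simp [Finset.mem_Icc]; omega) hsub0
    have hsub1 : insert 1 J ⊆ Finset.Icc 1 m :=
      Finset.insert_subset (by simp [Finset.mem_Icc]; omega) hsub0
    have hsub12 : insert 1 (insert 2 J) ⊆ Finset.Icc 1 m :=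
      Finset.insert_subset (by simp [Finset.mem_Icc]; omega) hsub2
    have hellJ : ell α m J = 2 * ∑ i ∈ J, α i - ∑ i ∈ Finset.Icc 3 m, α i := by
      have h' : ∑ i ∈ Finset.Icc 3 m \ J, α i
          = ∑ i ∈ Finset.Icc 3 m, α i - ∑ i ∈ J, α i := by
        rw [eq_sub_iff_add_eq, Finset.sum_sdiff hJs]
      rw [ell, h']; ring
    -- the four signed sums
    have hA : ∑ i ∈ J, α i - ∑ i ∈ Finset.Icc 1 m \ J, α i
        = ell α m J - α 1 - α 2 := by
      rw [hcompl J hsub0, hTot, hellJ]; ring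
    have hB : ∑ i ∈ insert 2 J, α i - ∑ i ∈ Finset.Icc 1 m \ insert 2 J, α i
        = ell α m J - α 1 + α 2 := by
      rw [hcompl _ hsub2, hTot, Finset.sum_insert h2J, hellJ]; ring
    have hC : ∑ i ∈ insert 1 J, α i - ∑ i ∈ Finset.Icc 1 m \ insert 1 J, α i
        = ell α m J + α 1 - α 2 := by
      rw [hcompl _ hsub1, hTot, Finset.sum_insert h1J, hellJ]; ring
    have hD : ∑ i ∈ insert 1 (insert 2 J), α i
          - ∑ i ∈ Finset.Icc 1 m \ insert 1 (insert 2 J), α i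
        = ell α m J + α 1 + α 2 := by
      rw [hcompl _ hsub12, hTot, Finset.sum_insert h12J, Finset.sum_insert h2J, hellJ]
      ring
    have hA0 : ell α m J - α 1 - α 2 ≠ 0 := hA ▸ sigma_ne hgen hsub0
    have hB0 : ell α m J - α 1 + α 2 ≠ 0 := hB ▸ sigma_ne hgen hsub2
    have hC0 : ell α m J + α 1 - α 2 ≠ 0 := hC ▸ sigma_ne hgen hsub1
    have hD0 : ell α m J + α 1 + α 2 ≠ 0 := hD ▸ sigma_ne hgen hsub12
    have hellc : ell α m (Finset.Icc 3 m \ J) = -ell α m J := by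
      rw [ell, ell, Finset.sdiff_sdiff_eq_self hJs]; ring
    -- sign computations
    have hs2 : sg k (insert 2 J) = -sg k J := by
      rw [sg, sg, Finset.card_insert_of_notMem h2J, Finset.sum_insert h2J, hk2]
      rw [show J.card + 1 + (0 + ∑ i ∈ J, k i) = (J.card + ∑ i ∈ J, k i) + 1 by omega,
        pow_succ]
      ring
    have hs1 : sg k (insert 1 J) = -sg k J := by
      rw [sg, sg, Finset.card_insert_of_notMem h1J, Finset.sum_insert h1J, hk1]
      rw [show J.card + 1 + (0 + ∑ i ∈ J, k i) = (J.card + ∑ i ∈ J, k i) + 1 by omega,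
        pow_succ]
      ring
    have hs12 : sg k (insert 1 (insert 2 J)) = sg k J := by
      rw [sg, sg, Finset.card_insert_of_notMem h12J, Finset.card_insert_of_notMem h2J,
        Finset.sum_insert h12J, Finset.sum_insert h2J, hk1, hk2]
      rw [show J.card + 1 + 1 + (0 + (0 + ∑ i ∈ J, k i))
           = (J.card + ∑ i ∈ J, k i) + 2 by omega, pow_add]
      norm_num
    have hcardc : (Finset.Icc 3 m \ J).card + J.card = m - 2 := by
      have := Finset.card_sdiff_add_card_eq_card hJs
      rwa [Nat.card_Icc] at this
    have hkc : (∑ i ∈ Finset.Icc 3 m \ J, k i) + ∑ i ∈ J, k i = m - 3 := by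
      rw [Finset.sum_sdiff hJs, hkI]
    have hsP : sg k (Finset.Icc 3 m \ J) = -sg k J := by
      rw [sg, sg]
      exact neg_one_pow_eq_neg_of_odd ⟨m - 3, by omega⟩
    -- triangularity characterisations
    have tri1 : Triangular α m J ↔
        (0 < ell α m J - α 1 + α 2 ∧ ell α m J - α 1 - α 2 < 0) := by
      constructor
      · rintro ⟨-, h0, ht1, ht2, ht3⟩
        exact ⟨lt_of_le_of_ne (by linarith) (Ne.symm hB0),
          lt_of_le_of_ne (by linarith) hA0⟩
      · rintro ⟨hB', hA'⟩
        exact ⟨hJs, by linarith, by linarith, by linarith, by linarith⟩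
    have tri2 : Triangular α m (Finset.Icc 3 m \ J) ↔
        (ell α m J + α 1 - α 2 < 0 ∧ 0 < ell α m J + α 1 + α 2) := by
      rw [Triangular, hellc]
      constructor
      · rintro ⟨-, h0, ht1, ht2, ht3⟩
        exact ⟨lt_of_le_of_ne (by linarith) hC0,
          lt_of_le_of_ne (by linarith) (Ne.symm hD0)⟩
      · rintro ⟨hC', hD'⟩
        exact ⟨Finset.sdiff_subset, by linarith, by linarith, by linarith, by linarith⟩
    simp only [gf, hA, hB, hC, hD, hs1, hs2, hs12, hsP, tri1, tri2]
    rcases hA0.lt_or_gt with hA' | hA' <;>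
      rcases hB0.lt_or_gt with hB' | hB' <;>
        rcases hC0.lt_or_gt with hC' | hC' <;>
          rcases hD0.lt_or_gt with hD' | hD' <;>
            first
              | linarith
              | (simp only [hA', hB', hC', hD', hA'.asymm, hB'.asymm, hC'.asymm, hD'.asymm,
                  if_true, if_false, true_and, and_true, false_and, and_false,
                  if_pos, if_neg, not_false_iff, ite_true, ite_false]
                 ring)
  -- assemble
  have L1 : ∑ R ∈ (Finset.Icc 1 m).powerset.filter
        (fun R => ∑ i ∈ R, α i - ∑ i ∈ Finset.Icc 1 m \ R, α i < 0),
        (-1 : ℝ) ^ (R.card + ∑ i ∈ R, k i)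
      = ∑ R ∈ (Finset.Icc 1 m).powerset, gf α k m R := by
    rw [Finset.sum_filter]
    exact Finset.sum_congr rfl (fun R _ => by rw [gf, sg])
  have L2 : ∑ R ∈ (Finset.Icc 1 m).powerset, gf α k m R
      = ∑ J ∈ (Finset.Icc 3 m).powerset,
          ((gf α k m J + gf α k m (insert 2 J)) +
            (gf α k m (insert 1 J) + gf α k m (insert 1 (insert 2 J)))) := by
    rw [hIcc, Finset.sum_powerset_insert h1I,
      Finset.sum_powerset_insert h2I, Finset.sum_powerset_insert h2I,
      ← Finset.sum_add_distrib, ← Finset.sum_add_distrib, ← Finset.sum_add_distrib]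
  have flip : ∑ J ∈ (Finset.Icc 3 m).powerset,
        (if Triangular α m (Finset.Icc 3 m \ J) then sg k (Finset.Icc 3 m \ J) else 0)
      = ∑ J ∈ (Finset.Icc 3 m).powerset,
        (if Triangular α m J then sg k J else 0) := by
    apply Finset.sum_nbij' (fun J => Finset.Icc 3 m \ J) (fun J => Finset.Icc 3 m \ J)
    · intro a ha; exact Finset.mem_powerset.2 Finset.sdiff_subset
    · intro a ha; exact Finset.mem_powerset.2 Finset.sdiff_subset
    · intro a ha; exact Finset.sdiff_sdiff_eq_self (Finset.mem_powerset.1 ha)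
    · intro a ha; exact Finset.sdiff_sdiff_eq_self (Finset.mem_powerset.1 ha)
    · intro a ha; rfl
  have R1 : ∑ J ∈ (Finset.Icc 3 m).powerset.filter (fun J => Triangular α m J),
        (-1 : ℝ) ^ ((∑ i ∈ Finset.Icc 3 m \ J, k i) + m - J.card)
      = ∑ J ∈ (Finset.Icc 3 m).powerset,
          (if Triangular α m J then -sg k J else 0) := by
    rw [Finset.sum_filter]
    apply Finset.sum_congr rfl
    intro J hJ
    have hJs : J ⊆ Finset.Icc 3 m := Finset.mem_powerset.1 hJ
    have hcardc : (Finset.Icc 3 m \ J).card + J.card = m - 2 := by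
      have := Finset.card_sdiff_add_card_eq_card hJs
      rwa [Nat.card_Icc] at this
    have hkc : (∑ i ∈ Finset.Icc 3 m \ J, k i) + ∑ i ∈ J, k i = m - 3 := by
      rw [Finset.sum_sdiff hJs, hkI]
    have hcard : J.card ≤ m - 2 := by omega
    have : (-1 : ℝ) ^ ((∑ i ∈ Finset.Icc 3 m \ J, k i) + m - J.card)
        = -(-1 : ℝ) ^ (J.card + ∑ i ∈ J, k i) :=
      neg_one_pow_eq_neg_of_odd ⟨m - 2, by omega⟩
    rw [this, sg]
  rw [L1, L2, Finset.sum_congr rfl key, Finset.sum_add_distrib, flip, R1]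
  rw [show (∑ J ∈ (Finset.Icc 3 m).powerset, (if Triangular α m J then -sg k J else 0))
      = -∑ J ∈ (Finset.Icc 3 m).powerset, (if Triangular α m J then sg k J else 0) by
    rw [← Finset.sum_neg_distrib]
    exact Finset.sum_congr rfl (fun J _ => by split_ifs <;> simp)]
  ring
end

section
/- For $m \ge 5$ odd and integer $k$ with $0 \le 2k \le m-3$, the equilateral intersection number $\rho_{m,2k} := (-1)^k \binom{\frac{m-3}{2}}{k}\binom{m-2}{\frac{m-1}{2}} \big/ \binom{m-2}{2k+1}$ satisfies $\rho_{m,2k} = \sum_{j=0}^{2k+1}(-1)^j \binom{2k+1}{j}\binom{m-2k-3}{\frac{m-3}{2}-j}$. -/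
open Polynomial Finset

namespace RhoAux

/-- Binomial coefficient `C(a, x)` with integer lower index (zero out of range). -/
def chi (a : ℕ) (x : ℤ) : ℚ :=
  if 0 ≤ x ∧ x ≤ a then (a.choose x.toNat : ℚ) else 0

lemma chi_natCast (a b : ℕ) : chi a (b : ℤ) = (a.choose b : ℚ) := by
  by_cases h : b ≤ a
  · rw [chi, if_pos ⟨by positivity, by exact_mod_cast h⟩]
    simp
  · rw [chi, if_neg (by push_cast; omega), Nat.choose_eq_zero_of_lt (by omega)]
    simp

lemma chi_neg (a : ℕ) (x : ℤ) (h : x < 0) : chi a x = 0 := by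
  rw [chi, if_neg (by omega)]

lemma chi_symm (a : ℕ) (x : ℤ) : chi a x = chi a (a - x) := by
  rcases Classical.em (0 ≤ x ∧ x ≤ a) with h | h
  · rw [chi, if_pos h, chi, if_pos (by omega)]
    have hx : ((a : ℤ) - x).toNat = a - x.toNat := by omega
    rw [hx, Nat.choose_symm (by omega)]
  · rw [chi, if_neg h, chi, if_neg (by omega)]

lemma chi_pascal (a : ℕ) (x : ℤ) : chi (a + 1) x = chi a x + chi a (x - 1) := by
  rcases Classical.em (1 ≤ x ∧ x ≤ a) with h | h
  · rw [chi, if_pos (by omega), chi, if_pos (by omega), chi, if_pos (by omega)]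
    have hx : x.toNat = (x - 1).toNat + 1 := by omega
    rw [hx, Nat.choose_succ_succ]
    push_cast
    ring
  · rcases Classical.em (x = 0) with h0 | h0
    · subst h0
      rw [chi, if_pos (by omega), chi, if_pos (by omega), chi, if_neg (by omega)]
      simp
    · rcases Classical.em (x = (a : ℤ) + 1) with h1 | h1
      · subst h1
        rw [chi, if_pos (by omega), chi, if_neg (by omega), chi, if_pos (by omega)]
        have e1 : ((a : ℤ) + 1).toNat = a + 1 := by omega
        have e2 : ((a : ℤ) + 1 - 1).toNat = a := by omega
        rw [e1, e2]
        simp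
      · rw [chi, if_neg (by omega), chi, if_neg (by omega), chi, if_neg (by omega)]
        simp

/-- Coefficient sum: `[x^r] (1-x)^(2k+1) (1+x)^(2s)` (valid for integer `r`). -/
def cc (k s : ℕ) (r : ℤ) : ℚ :=
  ∑ j ∈ Finset.range (2 * k + 2),
    (-1 : ℚ) ^ j * ((2 * k + 1).choose j) * chi (2 * s) (r - j)

lemma cc_of_neg (k s : ℕ) (r : ℤ) (h : r < 0) : cc k s r = 0 := by
  rw [cc]
  apply Finset.sum_eq_zero
  intro j _
  rw [chi_neg _ _ (by omega), mul_zero]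

lemma coeff_one_sub_X_pow (a r : ℕ) :
    ((1 - X : ℚ[X]) ^ a).coeff r = (-1 : ℚ) ^ r * a.choose r := by
  induction a generalizing r with
  | zero =>
    cases r with
    | zero => simp
    | succ t => simp [coeff_one]
  | succ n ih =>
    have e : (1 - X : ℚ[X]) ^ (n + 1) = (1 - X) ^ n - X * (1 - X) ^ n := by ring
    rw [e]
    cases r with
    | zero =>
      rw [coeff_sub, Polynomial.mul_coeff_zero, coeff_X_zero, zero_mul, sub_zero, ih 0]
      simp
    | succ t =>
      rw [coeff_sub, coeff_X_mul, ih (t + 1), ih t, Nat.choose_succ_succ]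
      push_cast
      ring

lemma cc_coeff (k s : ℕ) (r : ℕ) :
    ((1 - X : ℚ[X]) ^ (2 * k + 1) * (1 + X) ^ (2 * s)).coeff r = cc k s r := by
  rw [coeff_mul, Finset.Nat.sum_antidiagonal_eq_sum_range_succ_mk]
  have h1 : ∀ i ∈ Finset.range (r + 1),
      ((1 - X : ℚ[X]) ^ (2 * k + 1)).coeff i * ((1 + X : ℚ[X]) ^ (2 * s)).coeff (r - i)
        = (-1 : ℚ) ^ i * ((2 * k + 1).choose i) * chi (2 * s) ((r : ℤ) - i) := by
    intro i hi
    rw [Finset.mem_range] at hi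
    rw [coeff_one_sub_X_pow, coeff_one_add_X_pow]
    have e : ((r : ℤ) - i) = ((r - i : ℕ) : ℤ) := by omega
    rw [e, chi_natCast, mul_assoc]
  rw [Finset.sum_congr rfl h1]
  rw [cc]
  rw [Finset.sum_subset (Finset.range_subset_range.2 (by omega : r + 1 ≤ 2 * k + 2 + (r + 1)))
    (fun j _ hj => by
      rw [Finset.mem_range, not_lt] at hj
      rw [chi_neg _ _ (by omega), mul_zero])]
  rw [Finset.sum_subset (Finset.range_subset_range.2 (by omega : 2 * k + 2 ≤ 2 * k + 2 + (r + 1)))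
    (fun j _ hj => by
      rw [Finset.mem_range, not_lt] at hj
      rw [Nat.choose_eq_zero_of_lt (by omega)]
      push_cast
      ring)]

lemma cc_reflect (k s : ℕ) (r : ℤ) :
    cc k s (2 * (k + s) + 1 - r) = - cc k s r := by
  rw [cc, cc, ← Finset.sum_range_reflect, ← Finset.sum_neg_distrib]
  apply Finset.sum_congr rfl
  intro j hj
  rw [Finset.mem_range] at hj
  have hj' : j ≤ 2 * k + 1 := by omega
  have e0 : 2 * k + 2 - 1 - j = 2 * k + 1 - j := by omega
  rw [e0, Nat.choose_symm hj']
  have e1 : ((2 * k + 1 - j : ℕ) : ℤ) = 2 * k + 1 - j := by omega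
  have e2 : chi (2 * s) (2 * ((k : ℤ) + (s : ℤ)) + 1 - r - ((2 * k + 1 - j : ℕ) : ℤ))
      = chi (2 * s) (r - (j : ℤ)) := by
    rw [chi_symm (2 * s) (r - (j : ℤ))]
    congr 1
    rw [e1]
    push_cast
    ring
  rw [e2]
  have h2 : (-1 : ℚ) ^ j * (-1 : ℚ) ^ j = 1 := by
    rw [← pow_add]
    exact Even.neg_one_pow ⟨j, by ring⟩
  have h1 : (-1 : ℚ) ^ (2 * k + 1 - j) * (-1 : ℚ) ^ j = -1 := by
    rw [← pow_add]
    have e : 2 * k + 1 - j + j = 2 * k + 1 := by omega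
    rw [e]
    exact Odd.neg_one_pow ⟨k, by ring⟩
  have h3 : (-1 : ℚ) ^ (2 * k + 1 - j) = -(-1 : ℚ) ^ j := by
    calc (-1 : ℚ) ^ (2 * k + 1 - j)
        = ((-1 : ℚ) ^ (2 * k + 1 - j) * (-1 : ℚ) ^ j) * (-1 : ℚ) ^ j := by
          rw [mul_assoc, h2, mul_one]
      _ = -(-1 : ℚ) ^ j := by rw [h1]; ring
  rw [h3]
  ring

lemma deriv_one_sub (a : ℕ) :
    (1 - X : ℚ[X]) * derivative ((1 - X : ℚ[X]) ^ a) = -(C (a : ℚ)) * (1 - X) ^ a := by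
  cases a with
  | zero => simp
  | succ n =>
    rw [derivative_pow_succ]
    have hd : derivative (1 - X : ℚ[X]) = -1 := by
      simp
    rw [hd]
    have hc : ((n + 1 : ℕ) : ℚ) = (n : ℚ) + 1 := by push_cast; ring
    rw [hc]
    ring

lemma deriv_one_add (a : ℕ) :
    (1 + X : ℚ[X]) * derivative ((1 + X : ℚ[X]) ^ a) = C (a : ℚ) * (1 + X) ^ a := by
  cases a with
  | zero => simp
  | succ n =>
    rw [derivative_pow_succ]
    have hd : derivative (1 + X : ℚ[X]) = 1 := by
      simp
    rw [hd]
    have hc : ((n + 1 : ℕ) : ℚ) = (n : ℚ) + 1 := by push_cast; ring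
    rw [hc]
    ring

lemma poly_ode (k s : ℕ) :
    derivative ((1 - X : ℚ[X]) ^ (2 * k + 1) * (1 + X) ^ (2 * s))
      - X ^ 2 * derivative ((1 - X : ℚ[X]) ^ (2 * k + 1) * (1 + X) ^ (2 * s))
    = (C (((2 * s : ℕ)) : ℚ) - C (((2 * k + 1 : ℕ)) : ℚ))
        * ((1 - X) ^ (2 * k + 1) * (1 + X) ^ (2 * s))
      - (C (((2 * k + 1 : ℕ)) : ℚ) + C (((2 * s : ℕ)) : ℚ))
        * (X * ((1 - X) ^ (2 * k + 1) * (1 + X) ^ (2 * s))) := by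
  have h1 := deriv_one_sub (2 * k + 1)
  have h2 := deriv_one_add (2 * s)
  rw [derivative_mul]
  linear_combination ((1 + X : ℚ[X]) ^ (2 * s) * (1 + X)) * h1
    + ((1 - X : ℚ[X]) ^ (2 * k + 1) * (1 - X)) * h2

lemma ode_coeff (k s u : ℕ) :
    ((u : ℚ) + 3) * cc k s ((u : ℤ) + 3) - ((u : ℚ) + 1) * cc k s ((u : ℤ) + 1)
      = ((2 * s : ℚ) - (2 * k + 1)) * cc k s ((u : ℤ) + 2)
        - ((2 * k : ℚ) + 2 * s + 1) * cc k s ((u : ℤ) + 1) := by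
  have h := congrArg (fun p : ℚ[X] => p.coeff (u + 2)) (poly_ode k s)
  set P : ℚ[X] := (1 - X) ^ (2 * k + 1) * (1 + X) ^ (2 * s) with hP
  rw [coeff_sub, coeff_derivative, coeff_X_pow_mul (derivative P) 2 u, coeff_derivative,
    coeff_sub, sub_mul, coeff_sub, coeff_C_mul, coeff_C_mul,
    add_mul, coeff_add, coeff_C_mul, coeff_C_mul] at h
  rw [show u + 2 = (u + 1) + 1 from rfl, coeff_X_mul] at h
  have e3 : ((u : ℤ) + 3) = ((u + 1 + 1 + 1 : ℕ) : ℤ) := by omega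
  have e2 : ((u : ℤ) + 2) = ((u + 1 + 1 : ℕ) : ℤ) := by omega
  have e1 : ((u : ℤ) + 1) = ((u + 1 : ℕ) : ℤ) := by omega
  rw [e3, e2, e1, ← cc_coeff k s (u + 1 + 1 + 1), ← cc_coeff k s (u + 1 + 1),
    ← cc_coeff k s (u + 1)]
  push_cast at h ⊢
  linear_combination h

lemma crux (k s : ℕ) :
    ((k : ℚ) + s + 2) * cc k s ((k : ℤ) + s - 1)
      = (3 * (s : ℚ) - k) * cc k s ((k : ℤ) + s) := by
  rcases Nat.eq_zero_or_pos (k + s) with h0 | h0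
  · have hk : k = 0 := by omega
    have hs : s = 0 := by omega
    subst hk; subst hs
    push_cast
    rw [cc_of_neg 0 0 (-1) (by norm_num)]
    ring
  · obtain ⟨u, hu⟩ : ∃ u, k + s = u + 1 := ⟨k + s - 1, by omega⟩
    have R1 := ode_coeff k s u
    have R2 := cc_reflect k s ((u : ℤ) + 1)
    have R3 := cc_reflect k s (u : ℤ)
    have e2 : (2 * ((k : ℤ) + (s : ℤ)) + 1 - ((u : ℤ) + 1)) = (u : ℤ) + 2 := by
      have : (k : ℤ) + s = (u : ℤ) + 1 := by exact_mod_cast hu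
      omega
    have e3 : (2 * ((k : ℤ) + (s : ℤ)) + 1 - (u : ℤ)) = (u : ℤ) + 3 := by
      have : (k : ℤ) + s = (u : ℤ) + 1 := by exact_mod_cast hu
      omega
    rw [e2] at R2
    rw [e3] at R3
    have ea : ((k : ℤ) + s - 1) = (u : ℤ) := by
      have : (k : ℤ) + s = (u : ℤ) + 1 := by exact_mod_cast hu
      omega
    have eb : ((k : ℤ) + (s : ℤ)) = (u : ℤ) + 1 := by exact_mod_cast hu
    rw [ea, eb]
    have hq : (k : ℚ) + s = (u : ℚ) + 1 := by exact_mod_cast hu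
    linear_combination (-1 : ℚ) * R1 + ((u : ℚ) + 3) * R3
      - ((2 * s : ℚ) - (2 * k + 1)) * R2
      + (cc k s ((u : ℤ)) + cc k s ((u : ℤ) + 1)) * hq

lemma cc_bump (k s : ℕ) (r : ℤ) :
    cc k (s + 1) r = cc k s r + 2 * cc k s (r - 1) + cc k s (r - 2) := by
  rw [cc, cc, cc, cc, Finset.mul_sum, ← Finset.sum_add_distrib, ← Finset.sum_add_distrib]
  apply Finset.sum_congr rfl
  intro j _
  have e : 2 * (s + 1) = (2 * s + 1) + 1 := by ring
  rw [e, chi_pascal, chi_pascal, chi_pascal]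
  rw [show r - 1 - (j : ℤ) = r - j - 1 by ring, show r - 2 - (j : ℤ) = r - j - 2 by ring,
    show r - (j : ℤ) - 1 - 1 = r - j - 2 by ring]
  ring

lemma cc_base (k : ℕ) : cc k 0 (k : ℤ) = (-1 : ℚ) ^ k * ((2 * k + 1).choose k) := by
  rw [cc]
  rw [Finset.sum_eq_single_of_mem k (Finset.mem_range.2 (by omega))]
  · rw [show (k : ℤ) - k = ((0 : ℕ) : ℤ) by ring, chi_natCast]
    simp
  · intro j _ hj
    have : chi (2 * 0) ((k : ℤ) - j) = 0 := by
      rcases lt_or_gt_of_ne (fun h : (k : ℤ) - j = 0 => hj (by omega)) with h | h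
      · exact chi_neg _ _ h
      · rw [chi, if_neg (by simp; omega)]
    rw [this, mul_zero]

lemma key (k s : ℕ) :
    (((2 * (k + s) + 1).choose (2 * k + 1) : ℚ)) * cc k s ((k : ℤ) + s)
      = (-1 : ℚ) ^ k * ((k + s).choose k) * ((2 * (k + s) + 1).choose (k + s + 1)) := by
  induction s with
  | zero =>
    rw [show ((k : ℤ) + ((0 : ℕ) : ℤ)) = (k : ℤ) by push_cast; ring, cc_base]
    have h1 : (2 * (k + 0) + 1).choose (2 * k + 1) = 1 := by
      rw [show 2 * (k + 0) + 1 = 2 * k + 1 by ring, Nat.choose_self]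
    have h2 : (2 * (k + 0) + 1).choose (k + 0 + 1) = (2 * k + 1).choose k := by
      rw [show 2 * (k + 0) + 1 = 2 * k + 1 by ring, show k + 0 + 1 = k + 1 by ring]
      rw [← Nat.choose_symm (show k + 1 ≤ 2 * k + 1 by omega),
        show 2 * k + 1 - (k + 1) = k by omega]
    rw [h1, h2]
    simp
  | succ s ih =>
    -- notation
    have hbump := cc_bump k s ((k : ℤ) + s + 1)
    have hrefl := cc_reflect k s ((k : ℤ) + s)
    rw [show (2 * ((k : ℤ) + (s : ℤ)) + 1 - ((k : ℤ) + (s : ℤ))) = (k : ℤ) + s + 1 by ring]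
      at hrefl
    have hcrux := crux k s
    have hR : ((k : ℚ) + s + 2) * cc k (s + 1) ((k : ℤ) + s + 1)
        = (4 * (s : ℚ) + 2) * cc k s ((k : ℤ) + s) := by
      rw [show ((k : ℤ) + s + 1 - 1) = (k : ℤ) + s by ring,
        show ((k : ℤ) + s + 1 - 2) = (k : ℤ) + s - 1 by ring] at hbump
      linear_combination ((k : ℚ) + s + 2) * hbump + ((k : ℚ) + s + 2) * hrefl + hcrux
    -- numeric choose identities
    have a1 : (2 * (k + s) + 1).choose (2 * k + 1) * (2 * (k + s) + 2)
        = (2 * (k + s) + 2).choose (2 * k + 1) * (2 * s + 1) := by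
      have h := Nat.choose_mul_succ_eq (2 * (k + s) + 1) (2 * k + 1)
      have e : 2 * (k + s) + 1 + 1 - (2 * k + 1) = 2 * s + 1 := by omega
      rw [e] at h
      exact h
    have a2 : (2 * (k + s) + 2).choose (2 * k + 1) * (2 * (k + s) + 3)
        = (2 * (k + s) + 3).choose (2 * k + 1) * (2 * s + 2) := by
      have h := Nat.choose_mul_succ_eq (2 * (k + s) + 2) (2 * k + 1)
      have e : 2 * (k + s) + 2 + 1 - (2 * k + 1) = 2 * s + 2 := by omega
      rw [e] at h
      exact h
    have b1 : (2 * (k + s) + 1).choose (k + s + 1) * (2 * (k + s) + 2)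
        = (2 * (k + s) + 2).choose (k + s + 1) * (k + s + 1) := by
      have h := Nat.choose_mul_succ_eq (2 * (k + s) + 1) (k + s + 1)
      have e : 2 * (k + s) + 1 + 1 - (k + s + 1) = k + s + 1 := by omega
      rw [e] at h
      exact h
    have b2 : (2 * (k + s) + 2).choose (k + s + 1) * (2 * (k + s) + 3)
        = (2 * (k + s) + 3).choose (k + s + 1) * (k + s + 2) := by
      have h := Nat.choose_mul_succ_eq (2 * (k + s) + 2) (k + s + 1)
      have e : 2 * (k + s) + 2 + 1 - (k + s + 1) = k + s + 2 := by omega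
      rw [e] at h
      exact h
    have b3 : (2 * (k + s) + 3).choose (k + s + 2) = (2 * (k + s) + 3).choose (k + s + 1) := by
      rw [← Nat.choose_symm (show k + s + 2 ≤ 2 * (k + s) + 3 by omega),
        show 2 * (k + s) + 3 - (k + s + 2) = k + s + 1 by omega]
    have d1 : (k + s).choose k * (k + s + 1) = (k + s + 1).choose k * (s + 1) := by
      have h := Nat.choose_mul_succ_eq (k + s) k
      have e : k + s + 1 - k = s + 1 := by omega
      rw [e] at h
      exact h
    -- cast to ℚ
    have a1Q : ((2 * (k + s) + 1).choose (2 * k + 1) : ℚ) * (2 * ((k : ℚ) + s) + 2)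
        = ((2 * (k + s) + 2).choose (2 * k + 1) : ℚ) * (2 * (s : ℚ) + 1) := by
      exact_mod_cast a1
    have a2Q : ((2 * (k + s) + 2).choose (2 * k + 1) : ℚ) * (2 * ((k : ℚ) + s) + 3)
        = ((2 * (k + s) + 3).choose (2 * k + 1) : ℚ) * (2 * (s : ℚ) + 2) := by
      exact_mod_cast a2
    have b1Q : ((2 * (k + s) + 1).choose (k + s + 1) : ℚ) * (2 * ((k : ℚ) + s) + 2)
        = ((2 * (k + s) + 2).choose (k + s + 1) : ℚ) * ((k : ℚ) + s + 1) := by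
      exact_mod_cast b1
    have b2Q : ((2 * (k + s) + 2).choose (k + s + 1) : ℚ) * (2 * ((k : ℚ) + s) + 3)
        = ((2 * (k + s) + 3).choose (k + s + 1) : ℚ) * ((k : ℚ) + s + 2) := by
      exact_mod_cast b2
    have b3Q : ((2 * (k + s) + 3).choose (k + s + 2) : ℚ)
        = ((2 * (k + s) + 3).choose (k + s + 1) : ℚ) := by exact_mod_cast b3
    have d1Q : (((k + s).choose k : ℚ)) * ((k : ℚ) + s + 1)
        = (((k + s + 1).choose k : ℚ)) * ((s : ℚ) + 1) := by exact_mod_cast d1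
    -- index normalization in the goal
    have i1 : 2 * (k + (s + 1)) + 1 = 2 * (k + s) + 3 := by ring
    have i2 : k + (s + 1) = k + s + 1 := by ring
    rw [i1, i2, show k + s + 1 + 1 = k + s + 2 from rfl]
    have i4 : ((k : ℤ) + ((s + 1 : ℕ) : ℤ)) = (k : ℤ) + s + 1 := by push_cast; ring
    rw [i4]
    -- combined numeric identities
    have N1 : ((2 * (k + s) + 3).choose (2 * k + 1) : ℚ) * (2 * (s : ℚ) + 1) * (2 * (s : ℚ) + 2)
        = ((2 * (k + s) + 1).choose (2 * k + 1) : ℚ) * (2 * ((k : ℚ) + s) + 2)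
          * (2 * ((k : ℚ) + s) + 3) := by
      linear_combination (-(2 * ((k : ℚ) + s) + 3)) * a1Q - (2 * (s : ℚ) + 1) * a2Q
    have N2 : ((2 * (k + s) + 3).choose (k + s + 2) : ℚ) * ((k : ℚ) + s + 2) * ((k : ℚ) + s + 1)
        = ((2 * (k + s) + 1).choose (k + s + 1) : ℚ) * (2 * ((k : ℚ) + s) + 2)
          * (2 * ((k : ℚ) + s) + 3) := by
      linear_combination (-(2 * ((k : ℚ) + s) + 3)) * b1Q - ((k : ℚ) + s + 1) * b2Q
        + (((k : ℚ) + s + 2) * ((k : ℚ) + s + 1)) * b3Q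
    have hM : (((k : ℚ) + s + 2) * (2 * (s : ℚ) + 1) * (2 * (s : ℚ) + 2) * ((s : ℚ) + 1)
        * ((k : ℚ) + s + 1)) ≠ 0 := by positivity
    apply mul_right_cancel₀ hM
    linear_combination
      (cc k (s + 1) ((k : ℤ) + s + 1) * ((k : ℚ) + s + 2) * ((s : ℚ) + 1) * ((k : ℚ) + s + 1)) * N1
      + (((2 * (k + s) + 1).choose (2 * k + 1) : ℚ) * (2 * ((k : ℚ) + s) + 2)
          * (2 * ((k : ℚ) + s) + 3) * ((s : ℚ) + 1) * ((k : ℚ) + s + 1)) * hR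
      + ((4 * (s : ℚ) + 2) * (2 * ((k : ℚ) + s) + 2) * (2 * ((k : ℚ) + s) + 3)
          * ((s : ℚ) + 1) * ((k : ℚ) + s + 1)) * ih
      + ((-1 : ℚ) ^ k * ((2 * (k + s) + 1).choose (k + s + 1) : ℚ) * (4 * (s : ℚ) + 2)
          * (2 * ((k : ℚ) + s) + 2) * (2 * ((k : ℚ) + s) + 3) * ((s : ℚ) + 1)) * d1Q
      - ((-1 : ℚ) ^ k * ((k + s + 1).choose k : ℚ) * ((s : ℚ) + 1) ^ 2
          * (4 * (s : ℚ) + 2)) * N2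

end RhoAux

theorem rho_eq_alternating_sum (m k : ℕ) (hm : 5 ≤ m) (hmodd : Odd m)
    (hk : 2 * k ≤ m - 3) :
    ((-1 : ℚ) ^ k * (((m - 3) / 2).choose k) * ((m - 2).choose ((m - 1) / 2))) /
        ((m - 2).choose (2 * k + 1)) =
      ∑ j ∈ Finset.range (2 * k + 2),
        if j ≤ (m - 3) / 2 then
          (-1 : ℚ) ^ j * ((2 * k + 1).choose j) *
            ((m - 2 * k - 3).choose ((m - 3) / 2 - j))
        else 0 := by
  obtain ⟨t, ht⟩ := hmodd
  set n := (m - 3) / 2 with hn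
  have hm3 : m - 3 = 2 * n := by omega
  have h2 : m - 2 = 2 * n + 1 := by omega
  have h1 : (m - 1) / 2 = n + 1 := by omega
  have hkn : k ≤ n := by omega
  have h4 : m - 2 * k - 3 = 2 * (n - k) := by omega
  set s := n - k with hs
  have hns : n = k + s := by omega
  rw [h2, h1, h4]
  have hsum : (∑ j ∈ Finset.range (2 * k + 2),
      if j ≤ n then
        (-1 : ℚ) ^ j * ((2 * k + 1).choose j) * ((2 * s).choose (n - j))
      else 0) = RhoAux.cc k s (n : ℤ) := by
    rw [RhoAux.cc]
    apply Finset.sum_congr rfl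
    intro j _
    by_cases hjn : j ≤ n
    · rw [if_pos hjn]
      have e : ((n : ℤ) - j) = ((n - j : ℕ) : ℤ) := by omega
      rw [e, RhoAux.chi_natCast]
    · rw [if_neg hjn, RhoAux.chi_neg _ _ (by omega), mul_zero]
  rw [hsum]
  have hden : (((2 * n + 1).choose (2 * k + 1) : ℚ)) ≠ 0 := by
    have := Nat.choose_pos (show 2 * k + 1 ≤ 2 * n + 1 by omega)
    positivity
  rw [div_eq_iff hden]
  have hkey := RhoAux.key k s
  rw [← hns] at hkey
  have hz : ((k : ℤ) + s) = (n : ℤ) := by omega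
  rw [hz] at hkey
  linear_combination -hkey
end

section
/- Let $m \ge 4$, $I = \{3,\ldots,m\}$, let $\alpha \in \mathbb{R}_{>0}^{m+1}$ be generic with $\alpha_m > \alpha_{m+1}$. Write $\mathcal{T}_{m+1}$ for the triangular subsets of $\{3,\ldots,m+1\}$ relative to $(\alpha_1,\ldots,\alpha_{m+1})$, $\mathcal{T}_m^+$ for the triangular subsets of $\{3,\ldots,m\}$ relative to $(\alpha_1,\ldots,\alpha_{m-1},\alpha_m+\alpha_{m+1})$, and $\mathcal{T}_m^-$ relative to $(\alpha_1,\ldots,\alpha_{m-1},\alpha_m-\alpha_{m+1})$. Then $\mathcal{T}_{m+1}$ is the disjoint union of: (a) $\{J \in \mathcal{T}_m^+ : m \notin J\}$; (b) $\{J \cup \{m+1\} : J \in \mathcal{T}_m^+,\ m \in J\}$; (c) $\{J \in \mathcal{T}_m^- : m \in J\}$; (d) $\{J \cup \{m+1\} : J \in \mathcal{T}_m^-,\ m \notin J\}$. -/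
private lemma sum_update_mem {α : ℕ → ℝ} {m : ℕ} {c : ℝ} {S : Finset ℕ} (h : m ∈ S) :
    ∑ i ∈ S, Function.update α m c i = ∑ i ∈ S, α i - α m + c := by
  rw [Finset.sum_update_of_mem h, Finset.sum_eq_sum_sdiff_singleton_add h α]
  ring

private lemma sum_update_notMem {α : ℕ → ℝ} {m : ℕ} {c : ℝ} {S : Finset ℕ} (h : m ∉ S) :
    ∑ i ∈ S, Function.update α m c i = ∑ i ∈ S, α i :=
  Finset.sum_congr rfl fun i hi => Function.update_of_ne (by rintro rfl; exact h hi) _ _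

private lemma Icc_succ (m : ℕ) (hm : 3 ≤ m) :
    Finset.Icc 3 (m + 1) = insert (m + 1) (Finset.Icc 3 m) := by
  ext x; simp [Finset.mem_Icc]; omega

private lemma sdiff_succ_notmem {m : ℕ} {J : Finset ℕ} (hm : 3 ≤ m) (h : m + 1 ∉ J) :
    Finset.Icc 3 (m + 1) \ J = insert (m + 1) (Finset.Icc 3 m \ J) := by
  ext x
  simp only [Finset.mem_sdiff, Finset.mem_insert, Finset.mem_Icc]
  constructor
  · rintro ⟨⟨h1, h2⟩, h3⟩
    rcases Nat.lt_or_ge x (m + 1) with h' | h'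
    · exact Or.inr ⟨⟨h1, by omega⟩, h3⟩
    · exact Or.inl (by omega)
  · rintro (rfl | ⟨⟨h1, h2⟩, h3⟩)
    · exact ⟨⟨by omega, le_refl _⟩, h⟩
    · exact ⟨⟨h1, by omega⟩, h3⟩

private lemma sdiff_succ_insert {m : ℕ} {J : Finset ℕ} (hJ : J ⊆ Finset.Icc 3 m) :
    Finset.Icc 3 (m + 1) \ insert (m + 1) J = Finset.Icc 3 m \ J := by
  ext x; by_cases hx : x ∈ J
  · have := Finset.mem_Icc.mp (hJ hx)
    simp [hx, Finset.mem_Icc]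
  · simp [hx, Finset.mem_Icc]; omega

private lemma notMem_succ {m : ℕ} {J : Finset ℕ} (hJ : J ⊆ Finset.Icc 3 m) :
    m + 1 ∉ J := fun h => by have := Finset.mem_Icc.mp (hJ h); omega

private lemma ell_case_a {α : ℕ → ℝ} {m : ℕ} (hm : 3 ≤ m) {J : Finset ℕ}
    (hJ : J ⊆ Finset.Icc 3 m) (hmJ : m ∉ J) :
    ell α (m + 1) J = ell (Function.update α m (α m + α (m + 1))) m J := by
  have hmem : m ∈ Finset.Icc 3 m \ J := by
    simp [Finset.mem_Icc, hmJ]; omega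
  have h1 : m + 1 ∉ Finset.Icc 3 m \ J := fun h => by
    have := Finset.mem_Icc.mp (Finset.mem_sdiff.mp h).1; omega
  unfold ell
  rw [sdiff_succ_notmem hm (notMem_succ hJ), Finset.sum_insert h1,
    sum_update_notMem hmJ, sum_update_mem hmem]
  ring

private lemma ell_case_b {α : ℕ → ℝ} {m : ℕ} (hm : 3 ≤ m) {J : Finset ℕ}
    (hJ : J ⊆ Finset.Icc 3 m) (hmJ : m ∈ J) :
    ell α (m + 1) (insert (m + 1) J) = ell (Function.update α m (α m + α (m + 1))) m J := by
  have h1 : m ∉ Finset.Icc 3 m \ J := fun h => (Finset.mem_sdiff.mp h).2 hmJ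
  unfold ell
  rw [sdiff_succ_insert hJ, Finset.sum_insert (notMem_succ hJ),
    sum_update_mem hmJ, sum_update_notMem h1]
  ring

private lemma ell_case_c {α : ℕ → ℝ} {m : ℕ} (hm : 3 ≤ m) {J : Finset ℕ}
    (hJ : J ⊆ Finset.Icc 3 m) (hmJ : m ∈ J) :
    ell α (m + 1) J = ell (Function.update α m (α m - α (m + 1))) m J := by
  have h1 : m ∉ Finset.Icc 3 m \ J := fun h => (Finset.mem_sdiff.mp h).2 hmJ
  have h2 : m + 1 ∉ Finset.Icc 3 m \ J := fun h => by
    have := Finset.mem_Icc.mp (Finset.mem_sdiff.mp h).1; omega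
  unfold ell
  rw [sdiff_succ_notmem hm (notMem_succ hJ), Finset.sum_insert h2,
    sum_update_mem hmJ, sum_update_notMem h1]
  ring

private lemma ell_case_d {α : ℕ → ℝ} {m : ℕ} (hm : 3 ≤ m) {J : Finset ℕ}
    (hJ : J ⊆ Finset.Icc 3 m) (hmJ : m ∉ J) :
    ell α (m + 1) (insert (m + 1) J) = ell (Function.update α m (α m - α (m + 1))) m J := by
  have hmem : m ∈ Finset.Icc 3 m \ J := by
    simp [Finset.mem_Icc, hmJ]; omega
  unfold ell
  rw [sdiff_succ_insert hJ, Finset.sum_insert (notMem_succ hJ),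
    sum_update_notMem hmJ, sum_update_mem hmem]
  ring

private lemma triangular_transfer {α β : ℕ → ℝ} {m n : ℕ} {J J' : Finset ℕ}
    (h1 : β 1 = α 1) (h2 : β 2 = α 2) (hell : ell α n J' = ell β m J)
    (hs : J' ⊆ Finset.Icc 3 n) (hs' : J ⊆ Finset.Icc 3 m) :
    Triangular α n J' ↔ Triangular β m J := by
  unfold Triangular
  rw [hell, h1, h2]
  tauto

theorem triangular_recursion (m : ℕ) (hm : 4 ≤ m)
    (α : ℕ → ℝ) (hpos : ∀ i ∈ Finset.Icc 1 (m + 1), 0 < α i)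
    (hgen : IsGeneric α (Finset.Icc 1 (m + 1))) (hlast : α (m + 1) < α m) :
    {J : Finset ℕ | Triangular α (m + 1) J} =
        ({J : Finset ℕ | Triangular (Function.update α m (α m + α (m + 1))) m J ∧ m ∉ J} ∪
          (fun J => insert (m + 1) J) ''
            {J : Finset ℕ | Triangular (Function.update α m (α m + α (m + 1))) m J ∧ m ∈ J} ∪
          {J : Finset ℕ | Triangular (Function.update α m (α m - α (m + 1))) m J ∧ m ∈ J} ∪
          (fun J => insert (m + 1) J) ''
            {J : Finset ℕ | Triangular (Function.update α m (α m - α (m + 1))) m J ∧ m ∉ J}) ∧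
      List.Pairwise Disjoint
        [({J : Finset ℕ | Triangular (Function.update α m (α m + α (m + 1))) m J ∧ m ∉ J}),
         ((fun J => insert (m + 1) J) ''
            {J : Finset ℕ | Triangular (Function.update α m (α m + α (m + 1))) m J ∧ m ∈ J}),
         ({J : Finset ℕ | Triangular (Function.update α m (α m - α (m + 1))) m J ∧ m ∈ J}),
         ((fun J => insert (m + 1) J) ''
            {J : Finset ℕ | Triangular (Function.update α m (α m - α (m + 1))) m J ∧ m ∉ J})] := by
  have hm3 : 3 ≤ m := by omega
  have hne1 : m ≠ 1 := by omega
  have hne2 : m ≠ 2 := by omega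
  have hu1 : ∀ c : ℝ, Function.update α m c 1 = α 1 := fun c =>
    Function.update_of_ne (by omega) _ _
  have hu2 : ∀ c : ℝ, Function.update α m c 2 = α 2 := fun c =>
    Function.update_of_ne (by omega) _ _
  -- the key fact: membership of `m+1` in any set in the image classes, and of `m`
  have hmem_tri : ∀ J : Finset ℕ, ∀ c : ℝ,
      Triangular (Function.update α m c) m J → m + 1 ∉ J := fun J c hT => notMem_succ hT.1
  constructor
  · ext J
    simp only [Set.mem_setOf_eq, Set.mem_union, Set.mem_image]
    constructor
    · rintro hT
      have hsub := hT.1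
      by_cases hm1 : m + 1 ∈ J
      · -- strip off m+1
        set J0 := J.erase (m + 1) with hJ0
        have hJins : insert (m + 1) J0 = J := Finset.insert_erase hm1
        have hJ0sub : J0 ⊆ Finset.Icc 3 m := by
          intro x hx
          have hx1 := Finset.mem_of_mem_erase hx
          have hx2 := Finset.ne_of_mem_erase hx
          have := Finset.mem_Icc.mp (hsub hx1)
          exact Finset.mem_Icc.mpr ⟨this.1, by omega⟩
        by_cases hmm : m ∈ J0
        · left; left; right
          refine ⟨J0, ⟨?_, hmm⟩, hJins⟩
          rw [← triangular_transfer (hu1 _) (hu2 _) (ell_case_b hm3 hJ0sub hmm) (hJins ▸ hsub)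
            hJ0sub, hJins]
          exact hT
        · right
          refine ⟨J0, ⟨?_, hmm⟩, hJins⟩
          rw [← triangular_transfer (hu1 _) (hu2 _) (ell_case_d hm3 hJ0sub hmm) (hJins ▸ hsub)
            hJ0sub, hJins]
          exact hT
      · have hJsub : J ⊆ Finset.Icc 3 m := by
          intro x hx
          have := Finset.mem_Icc.mp (hsub hx)
          refine Finset.mem_Icc.mpr ⟨this.1, ?_⟩
          rcases Nat.lt_or_ge x (m + 1) with h | h
          · omega
          · exfalso; apply hm1; have : x = m + 1 := by omega
            exact this ▸ hx
        by_cases hmm : m ∈ J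
        · left; right
          refine ⟨?_, hmm⟩
          rw [← triangular_transfer (hu1 _) (hu2 _) (ell_case_c hm3 hJsub hmm) hsub hJsub]
          exact hT
        · left; left; left
          refine ⟨?_, hmm⟩
          rw [← triangular_transfer (hu1 _) (hu2 _) (ell_case_a hm3 hJsub hmm) hsub hJsub]
          exact hT
    · rintro (((⟨hT, hmm⟩ | ⟨J0, ⟨hT, hmm⟩, rfl⟩) | ⟨hT, hmm⟩) | ⟨J0, ⟨hT, hmm⟩, rfl⟩)
      · have hJsub : J ⊆ Finset.Icc 3 m := hT.1
        have hsub : J ⊆ Finset.Icc 3 (m + 1) :=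
          hJsub.trans (Finset.Icc_subset_Icc_right (by omega))
        rw [triangular_transfer (hu1 _) (hu2 _) (ell_case_a hm3 hJsub hmm) hsub hJsub]
        exact hT
      · have hJsub : J0 ⊆ Finset.Icc 3 m := hT.1
        have hsub : insert (m + 1) J0 ⊆ Finset.Icc 3 (m + 1) := by
          intro x hx
          rcases Finset.mem_insert.mp hx with rfl | hx
          · exact Finset.mem_Icc.mpr ⟨by omega, le_refl _⟩
          · exact (hJsub.trans (Finset.Icc_subset_Icc_right (by omega))) hx
        rw [triangular_transfer (hu1 _) (hu2 _) (ell_case_b hm3 hJsub hmm) hsub hJsub]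
        exact hT
      · have hJsub : J ⊆ Finset.Icc 3 m := hT.1
        have hsub : J ⊆ Finset.Icc 3 (m + 1) :=
          hJsub.trans (Finset.Icc_subset_Icc_right (by omega))
        rw [triangular_transfer (hu1 _) (hu2 _) (ell_case_c hm3 hJsub hmm) hsub hJsub]
        exact hT
      · have hJsub : J0 ⊆ Finset.Icc 3 m := hT.1
        have hsub : insert (m + 1) J0 ⊆ Finset.Icc 3 (m + 1) := by
          intro x hx
          rcases Finset.mem_insert.mp hx with rfl | hx
          · exact Finset.mem_Icc.mpr ⟨by omega, le_refl _⟩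
          · exact (hJsub.trans (Finset.Icc_subset_Icc_right (by omega))) hx
        rw [triangular_transfer (hu1 _) (hu2 _) (ell_case_d hm3 hJsub hmm) hsub hJsub]
        exact hT
  · -- disjointness: purely combinatorial via membership of `m` and `m+1`
    have key : ∀ (c : ℝ) (J : Finset ℕ), Triangular (Function.update α m c) m J →
        m + 1 ∉ J := fun c J hT => notMem_succ hT.1
    refine List.Pairwise.cons ?_ (List.Pairwise.cons ?_ (List.Pairwise.cons ?_
      (List.pairwise_singleton _ _)))
    · intro s hs
      simp only [List.mem_cons, List.mem_singleton, List.not_mem_nil] at hs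
      rcases hs with rfl | rfl | rfl | h
      · rw [Set.disjoint_left]
        rintro J ⟨hT, hmm⟩ ⟨J0, ⟨hT0, hmm0⟩, rfl⟩
        exact hmm (Finset.mem_insert.mpr (Or.inr hmm0))
      · rw [Set.disjoint_left]
        rintro J ⟨hT, hmm⟩ ⟨hT0, hmm0⟩
        exact hmm hmm0
      · rw [Set.disjoint_left]
        rintro J ⟨hT, hmm⟩ ⟨J0, ⟨hT0, hmm0⟩, rfl⟩
        exact notMem_succ hT.1 (Finset.mem_insert_self _ _)
      · exact absurd h (by simp)
    · intro s hs
      simp only [List.mem_cons, List.mem_singleton, List.not_mem_nil] at hs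
      rcases hs with rfl | rfl | h
      · rw [Set.disjoint_left]
        rintro J ⟨J0, ⟨hT0, hmm0⟩, rfl⟩ ⟨hT, hmm⟩
        exact key _ _ hT (Finset.mem_insert_self _ _)
      · rw [Set.disjoint_left]
        rintro J ⟨J0, ⟨hT0, hmm0⟩, rfl⟩ ⟨J1, ⟨hT1, hmm1⟩, hE⟩
        have hE' : insert (m + 1) J1 = insert (m + 1) J0 := hE
        have hmem : m ∈ insert (m + 1) J1 := by
          rw [hE']; exact Finset.mem_insert.mpr (Or.inr hmm0)
        rcases Finset.mem_insert.mp hmem with h | h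
        · omega
        · exact hmm1 h
      · exact absurd h (by simp)
    · intro s hs
      simp only [List.mem_cons, List.mem_singleton, List.not_mem_nil] at hs
      rcases hs with rfl | h
      · rw [Set.disjoint_left]
        rintro J ⟨hT, hmm⟩ ⟨J0, ⟨hT0, hmm0⟩, rfl⟩
        exact key _ _ hT (Finset.mem_insert_self _ _)
      · exact absurd h (by simp)
end
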